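/- arXiv:1202.3406 — 10 statements merged into one kernel-verified Lean document; each statement's English description precedes it below -/
import Mathlib

section
/- If M is a matroid on ground set E whose empty set is not a base, then the collection B(M⁻) = {B \ {e} : B a base of M, e ∈ B} satisfies the base axioms of a matroid on E (in particular the maximality/exchange conditions), so M⁻ is a matroid. -/
open Set

namespace MminusAux

variable {α : Type*} {M : Matroid α} {B X I : Set α} {e : α}

/-- The independent sets of `M⁻` : independent non-bases of `M`. -/
private def P (M : Matroid α) : Set α → Prop := fun I => M.Indep I ∧ ¬ M.IsBase I

private lemma maximal_of_base_diff (hB : M.IsBase B) (he : e ∈ B) : Maximal (P M) (B \ {e}) := by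
  have hind : M.Indep (B \ {e}) := hB.indep.subset diff_subset
  have hnb : ¬ M.IsBase (B \ {e}) := by
    intro hb
    have heq := hb.eq_of_subset_indep hB.indep diff_subset
    have : e ∈ B \ {e} := by rw [heq]; exact he
    exact this.2 rfl
  refine ⟨⟨hind, hnb⟩, fun Y hY hsub => ?_⟩
  by_contra hnsub
  obtain ⟨y, hyY, hynB⟩ := not_subset.mp hnsub
  by_cases hye : y = e
  · subst hye
    have hBY : B ⊆ Y := by
      have : insert y (B \ {y}) ⊆ Y := insert_subset hyY hsub
      rwa [insert_diff_singleton, insert_eq_of_mem he] at this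
    exact hY.2 ((hB.eq_of_subset_indep hY.1 hBY) ▸ hB)
  · have hyB : y ∉ B := fun hyB => hynB ⟨hyB, hye⟩
    have hins : M.Indep (insert y (B \ {e})) := hY.1.subset (insert_subset hyY hsub)
    have hbase := hB.exchange_isBase_of_indep hyB hins
    have heq : insert y (B \ {e}) = Y :=
      hbase.eq_of_subset_indep hY.1 (insert_subset hyY hsub)
    exact hY.2 (heq ▸ hbase)

private lemma maximal_iff : Maximal (P M) X ↔ ∃ B e, M.IsBase B ∧ e ∈ B ∧ X = B \ {e} := by
  constructor
  · rintro ⟨⟨hXi, hXb⟩, hmax⟩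
    obtain ⟨B, hB, hXB⟩ := hXi.exists_isBase_superset
    have hne : X ≠ B := fun hXB' => hXb (hXB' ▸ hB)
    obtain ⟨e, heB, heX⟩ := exists_of_ssubset (hXB.ssubset_of_ne hne)
    have hXBe : X ⊆ B \ {e} := subset_diff_singleton hXB heX
    have hP : P M (B \ {e}) := (maximal_of_base_diff hB heB).1
    have : B \ {e} ⊆ X := hmax hP hXBe
    exact ⟨B, e, hB, heB, (subset_antisymm hXBe this)⟩
  · rintro ⟨B, e, hB, he, rfl⟩
    exact maximal_of_base_diff hB he

private lemma aug {I Bm : Set α} (hI : P M I) (hImax : ¬ Maximal (P M) I)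
    (hBmax : Maximal (P M) Bm) : ∃ x ∈ Bm \ I, P M (insert x I) := by
  obtain ⟨B, e, hB, heB, rfl⟩ := maximal_iff.mp hBmax
  by_contra hcon
  push_neg at hcon
  -- every insertion from Bm into I fails to be independent
  have hdep : ∀ x ∈ (B \ {e}) \ I, ¬ M.Indep (insert x I) := by
    intro x hx hxind
    have hxI : x ∉ I := hx.2
    have hbase : M.IsBase (insert x I) := by
      by_contra hnb
      exact hcon x hx ⟨hxind, hnb⟩
    have : I = insert x I \ {x} := (insert_diff_self_of_notMem hxI).symm
    exact hImax (this ▸ maximal_of_base_diff hbase (mem_insert x _))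
  -- hence Bm ⊆ closure I
  have hsub_cl : B \ {e} ⊆ M.closure I := by
    intro x hx
    by_cases hxI : x ∈ I
    · exact M.subset_closure I hI.1.subset_ground hxI
    · have hxE : x ∈ M.E := hB.subset_ground hx.1
      by_contra hxcl
      exact hdep x ⟨hx, hxI⟩ ((hI.1.insert_indep_iff_of_notMem hxI).mpr ⟨hxE, hxcl⟩)
  have hecl : e ∉ M.closure I := by
    intro hecl
    have hBcl : B ⊆ M.closure I := by
      intro y hy
      by_cases hye : y = e
      · exact hye ▸ hecl
      · exact hsub_cl ⟨hy, hye⟩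
    have : M.E ⊆ M.closure I := by
      rw [← hB.closure_eq]
      exact M.closure_subset_closure_of_subset_closure hBcl
    exact hI.2 (hI.1.isBase_of_ground_subset_closure this)
  have heI : e ∉ I := fun heI => hecl (M.subset_closure I hI.1.subset_ground heI)
  have heE : e ∈ M.E := hB.subset_ground heB
  have hKind : M.Indep (insert e I) :=
    (hI.1.insert_indep_iff_of_notMem heI).mpr ⟨heE, hecl⟩
  have hKbase : M.IsBase (insert e I) := by
    apply hKind.isBase_of_ground_subset_closure
    rw [← hB.closure_eq]
    apply M.closure_subset_closure_of_subset_closure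
    intro y hy
    by_cases hye : y = e
    · exact M.subset_closure _ hKind.subset_ground (hye ▸ mem_insert e I)
    · exact (M.closure_subset_closure (subset_insert e I)) (hsub_cl ⟨hy, hye⟩)
  have hIeq : I = insert e I \ {e} := by
    rw [insert_diff_self_of_notMem heI]
  exact hImax (hIeq ▸ maximal_of_base_diff hKbase (mem_insert e _))

private lemma maxSubset (_h : ¬ M.IsBase ∅) :
    ∀ X, X ⊆ M.E → Matroid.ExistsMaximalSubsetProperty (P M) X := by
  intro X hXE I hPI hIX
  obtain ⟨J, hIJ, hJmax⟩ := M.maximality X hXE I hPI.1 hIX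
  by_cases hJb : M.IsBase J
  · -- remove an element of J \ I
    have hne : I ≠ J := fun hIJ' => hPI.2 (hIJ' ▸ hJb)
    obtain ⟨e, heJ, heI⟩ := exists_of_ssubset (hIJ.ssubset_of_ne hne)
    refine ⟨J \ {e}, subset_diff_singleton hIJ heI,
      ⟨⟨(maximal_of_base_diff hJb heJ).1, diff_subset.trans hJmax.1.2⟩, ?_⟩⟩
    rintro K ⟨hPK, _hKX⟩ hJK
    exact (maximal_of_base_diff hJb heJ).2 hPK hJK
  · refine ⟨J, hIJ, ⟨⟨⟨hJmax.1.1, hJb⟩, hJmax.1.2⟩, ?_⟩⟩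
    rintro K ⟨hPK, hKX⟩ hJK
    exact hJmax.2 ⟨hPK.1, hKX⟩ hJK

end MminusAux

/-- If `∅` is not a base of `M`, then the collection of sets `B \ {e}` for `B` a base of `M`
and `e ∈ B` is the set of bases of a matroid `M⁻` on the same ground set. -/
theorem Mminus_isMatroid {α : Type*} (M : Matroid α) (h : ¬ M.IsBase ∅) :
    ∃ N : Matroid α, N.E = M.E ∧
      ∀ X, N.IsBase X ↔ ∃ B e, M.IsBase B ∧ e ∈ B ∧ X = B \ {e} := by
  set NI : IndepMatroid α :=
    { E := M.E
      Indep := MminusAux.P M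
      indep_empty := ⟨M.empty_indep, h⟩
      indep_subset := by
        rintro I J ⟨hJi, hJb⟩ hIJ
        refine ⟨hJi.subset hIJ, fun hIb => hJb ?_⟩
        exact (hIb.eq_of_subset_indep hJi hIJ) ▸ hIb
      indep_aug := fun I B hI hImax hBmax => MminusAux.aug hI hImax hBmax
      indep_maximal := MminusAux.maxSubset h
      subset_ground := fun I hI => hI.1.subset_ground }
  refine ⟨NI.matroid, rfl, fun X => ?_⟩
  show Maximal NI.Indep X ↔ _
  exact MminusAux.maximal_iff
end

section
/- If M is a matroid whose ground set E is not a base, then the collection {B ∪ {e} : B a base of M, e ∈ E \ B} is the set of bases of a matroid M⁺ on E, and (M⁺)* = (M*)⁻. -/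
open Set

namespace MplusAux

open scoped Matroid

variable {α : Type*} {N : Matroid α} {I X B : Set α}

/-- Independence predicate for the one-element elongation. -/
def Indep' (N : Matroid α) (I : Set α) : Prop := I ⊆ N.E ∧ ∃ e, N.Indep (I \ {e})

lemma exists_mem_diff_base (hN : ¬ N.IsBase N.E) : ∃ B e, N.IsBase B ∧ e ∈ N.E \ B := by
  obtain ⟨B, hB⟩ := N.exists_isBase
  have hne : B ≠ N.E := fun h ↦ hN (h ▸ hB)
  obtain ⟨y, hy⟩ := exists_of_ssubset (hB.subset_ground.ssubset_of_ne hne)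
  exact ⟨B, y, hB, hy⟩

lemma indep'_of_indep (hN : ¬ N.IsBase N.E) (hI : N.Indep I) : Indep' N I := by
  obtain ⟨B, e, hB, he⟩ := exists_mem_diff_base hN
  exact ⟨hI.subset_ground, e, hI.subset diff_subset⟩

lemma indep'_subset {J : Set α} (hJ : Indep' N J) (hIJ : I ⊆ J) : Indep' N I := by
  obtain ⟨hJE, e, he⟩ := hJ
  exact ⟨hIJ.trans hJE, e, he.subset (diff_subset_diff_left hIJ)⟩

lemma maximal_insert {e : α} (hB : N.IsBase B) (he : e ∈ N.E \ B) :
    Maximal (Indep' N) (insert e B) := by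
  constructor
  · exact ⟨insert_subset he.1 hB.subset_ground, e,
      by rw [insert_diff_self_of_notMem he.2]; exact hB.indep⟩
  · intro K hK hPK x hxK
    by_contra hx
    obtain ⟨hKE, g, hg⟩ := hK
    have hgP : g ∈ insert e B := by
      by_contra hgP
      have hsub : insert e B ⊆ K \ {g} :=
        subset_diff_singleton hPK (fun hgK' ↦ hgP hgK')
      have heq := hB.eq_of_subset_indep (hg.subset hsub) (subset_insert e B)
      exact he.2 (heq ▸ mem_insert e B)
    have hBK : B ⊆ K := (subset_insert e B).trans hPK
    rcases mem_insert_iff.1 hgP with hge | hgB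
    · -- g = e
      rw [hge] at hg
      have hxe : x ≠ e := fun h ↦ hx (h ▸ mem_insert e B)
      have heB : e ∉ B := he.2
      have hsub : insert x B ⊆ K \ {e} :=
        insert_subset ⟨hxK, hxe⟩ (subset_diff_singleton hBK heB)
      have heq := hB.eq_of_subset_indep (hg.subset hsub) (subset_insert x B)
      exact hx (Or.inr (heq ▸ mem_insert x B))
    · -- g ∈ B
      have hxg : x ≠ g := fun h ↦ hx (Or.inr (h ▸ hgB))
      have heg : e ≠ g := fun h ↦ he.2 (h ▸ hgB)
      have hxe : x ≠ e := fun h ↦ hx (h ▸ mem_insert e B)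
      have hsub : insert e (insert x (B \ {g})) ⊆ K \ {g} := by
        refine insert_subset ⟨hPK (mem_insert e B), heg⟩
          (insert_subset ⟨hxK, hxg⟩ ?_)
        exact fun b hb ↦ ⟨hBK hb.1, hb.2⟩
      obtain ⟨B', hB', hsubB'⟩ := (hg.subset hsub).exists_isBase_superset
      have h1 : B \ B' ⊆ {g} := by
        intro b hb
        by_contra hbg
        exact hb.2 (hsubB' (Or.inr (Or.inr ⟨hb.1, hbg⟩)))
      have h2 : ({e, x} : Set α) ⊆ B' \ B := by
        intro y hy
        rcases mem_insert_iff.1 hy with hye | hyx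
        · rw [hye]; exact ⟨hsubB' (mem_insert _ _), he.2⟩
        · rw [mem_singleton_iff.1 hyx]
          exact ⟨hsubB' (Or.inr (mem_insert _ _)), fun hxB ↦ hx (Or.inr hxB)⟩
      have hcard := hB.encard_diff_comm hB'
      have hle1 : (B \ B').encard ≤ 1 := by
        simpa using encard_le_encard h1
      have hge2 : (2 : ℕ∞) ≤ (B' \ B).encard := by
        rw [← encard_pair hxe.symm]  -- ({e,x}).encard = 2 needs e ≠ x
        exact encard_le_encard h2
      rw [hcard] at hle1
      exact absurd (hge2.trans hle1) (by norm_num)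

lemma exists_maximal_superset (hN : ¬ N.IsBase N.E) (hI : Indep' N I) :
    ∃ J, I ⊆ J ∧ Maximal (Indep' N) J := by
  by_cases hIi : N.Indep I
  · obtain ⟨B, hB, hIB⟩ := hIi.exists_isBase_superset
    have hne : B ≠ N.E := fun h ↦ hN (h ▸ hB)
    obtain ⟨y, hy⟩ := exists_of_ssubset (hB.subset_ground.ssubset_of_ne hne)
    exact ⟨insert y B, hIB.trans (subset_insert y B), maximal_insert hB hy⟩
  · obtain ⟨hIE, e, he⟩ := hI
    have heI : e ∈ I := by
      by_contra h
      exact hIi (by rwa [diff_singleton_eq_self h] at he)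
    obtain ⟨B, hB, hIB⟩ := he.exists_isBase_superset
    have heB : e ∉ B := by
      intro heB
      refine hIi (hB.indep.subset fun x hx ↦ ?_)
      rcases eq_or_ne x e with rfl | hne
      · exact heB
      · exact hIB ⟨hx, hne⟩
    refine ⟨insert e B, ?_, maximal_insert hB ⟨hIE heI, heB⟩⟩
    intro x hx
    rcases eq_or_ne x e with rfl | hne
    · exact mem_insert x B
    · exact Or.inr (hIB ⟨hx, hne⟩)

lemma maximal_indep'_iff (hN : ¬ N.IsBase N.E) :
    Maximal (Indep' N) X ↔ ∃ B e, N.IsBase B ∧ e ∈ N.E \ B ∧ X = insert e B := by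
  constructor
  · intro hX
    have hXE := hX.prop.1
    by_cases hXi : N.Indep X
    · exfalso
      obtain ⟨B, hB, hXB⟩ := hXi.exists_isBase_superset
      have hne : B ≠ N.E := fun h' ↦ hN (h' ▸ hB)
      obtain ⟨y, hy⟩ := exists_of_ssubset (hB.subset_ground.ssubset_of_ne hne)
      have hle := hX.2 (maximal_insert hB hy).1 (hXB.trans (subset_insert y B))
      exact hy.2 (hXB (hle (mem_insert y B)))
    · obtain ⟨hXE', e, he⟩ := hX.prop
      have heX : e ∈ X := by
        by_contra h'
        exact hXi (by rwa [diff_singleton_eq_self h'] at he)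
      obtain ⟨B, hB, hXB⟩ := he.exists_isBase_superset
      have heB : e ∉ B := by
        intro heB
        refine hXi (hB.indep.subset fun x hx ↦ ?_)
        rcases eq_or_ne x e with rfl | hne
        · exact heB
        · exact hXB ⟨hx, hne⟩
      have hXsub : X ⊆ insert e B := by
        intro x hx
        rcases eq_or_ne x e with rfl | hne
        · exact mem_insert x B
        · exact Or.inr (hXB ⟨hx, hne⟩)
      have hle := hX.2 (maximal_insert hB ⟨hXE heX, heB⟩).1 hXsub
      exact ⟨B, e, hB, ⟨hXE heX, heB⟩, hXsub.antisymm hle⟩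
  · rintro ⟨B, e, hB, he, rfl⟩
    exact maximal_insert hB he

lemma indep'_aug (hN : ¬ N.IsBase N.E) ⦃I B : Set α⦄ (hI : Indep' N I)
    (hImax : ¬ Maximal (Indep' N) I) (hBmax : Maximal (Indep' N) B) :
    ∃ x ∈ B \ I, Indep' N (insert x I) := by
  obtain ⟨B₀, f, hB₀, hf, rfl⟩ := (maximal_indep'_iff hN).1 hBmax
  by_cases hIi : N.Indep I
  · have hBI : ¬ (insert f B₀ ⊆ I) := by
      intro hsub
      exact hImax ⟨hI, fun K hK hIK ↦ (hBmax.2 hK (hsub.trans hIK)).trans hsub⟩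
    obtain ⟨x, hxB, hxI⟩ := not_subset.1 hBI
    refine ⟨x, ⟨hxB, hxI⟩, insert_subset (hBmax.prop.1 hxB) hI.1, x, ?_⟩
    exact hIi.subset fun y hy ↦
      (mem_insert_iff.1 hy.1).resolve_left (by simpa using hy.2)
  · obtain ⟨hIE, e, he⟩ := hI
    have heI : e ∈ I := by
      by_contra h'
      exact hIi (by rwa [diff_singleton_eq_self h'] at he)
    have hnb : ¬ N.IsBase (I \ {e}) := by
      intro hb
      have hmax := maximal_insert hb ⟨hIE heI, fun hc ↦ hc.2 rfl⟩
      rw [insert_diff_singleton, insert_eq_of_mem heI] at hmax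
      exact hImax hmax
    obtain ⟨x, hx, hxi⟩ := he.exists_insert_of_not_isBase hnb hB₀
    have hxe : x ≠ e := by
      rintro rfl
      rw [insert_diff_singleton, insert_eq_of_mem heI] at hxi
      exact hIi hxi
    have hxI : x ∉ I := fun hxI ↦ hx.2 ⟨hxI, hxe⟩
    refine ⟨x, ⟨Or.inr hx.1, hxI⟩,
      insert_subset (hB₀.subset_ground hx.1) hIE, e, ?_⟩
    rwa [← insert_diff_singleton_comm hxe]

lemma indep'_maximal (hN : ¬ N.IsBase N.E) (X : Set α) (hXE : X ⊆ N.E) :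
    Matroid.ExistsMaximalSubsetProperty (Indep' N) X := by
  intro I hI hIX
  by_cases hXi : N.Indep X
  · exact ⟨X, hIX, ⟨⟨indep'_of_indep hN hXi, rfl.subset⟩, fun K hK _ ↦ hK.2⟩⟩
  · have hN' : ¬ (N ↾ X).IsBase (N ↾ X).E := by
      rw [Matroid.restrict_ground_eq]
      intro hb
      exact hXi (Matroid.restrict_indep_iff.1 hb.indep).1
    obtain ⟨hIE, e, he⟩ := hI
    have hI' : Indep' (N ↾ X) I := by
      refine ⟨by simpa [Matroid.restrict_ground_eq] using hIX, e, ?_⟩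
      exact Matroid.restrict_indep_iff.2 ⟨he, diff_subset.trans hIX⟩
    obtain ⟨J, hIJ, hJmax⟩ := exists_maximal_superset hN' hI'
    have hJX : J ⊆ X := hJmax.prop.1
    obtain ⟨-, g, hg⟩ := hJmax.prop
    refine ⟨J, hIJ, ⟨⟨⟨hJX.trans hXE, g, (Matroid.restrict_indep_iff.1 hg).1⟩, hJX⟩, ?_⟩⟩
    rintro K ⟨⟨hKE, f, hf⟩, hKX⟩ hJK
    exact hJmax.2 ⟨hKX, f, Matroid.restrict_indep_iff.2 ⟨hf, diff_subset.trans hKX⟩⟩ hJK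

/-- The one-element elongation as an `IndepMatroid`. -/
def MpInd (N : Matroid α) (hN : ¬ N.IsBase N.E) : IndepMatroid α where
  E := N.E
  Indep := Indep' N
  indep_empty := indep'_of_indep hN N.empty_indep
  indep_subset := fun _ _ hJ hIJ ↦ indep'_subset hJ hIJ
  indep_aug := indep'_aug hN
  indep_maximal := fun X hX ↦ indep'_maximal hN X hX
  subset_ground := fun _ hI ↦ hI.1

end MplusAux

open MplusAux Set

/-- If the ground set `E` of `M` is not a base, then the sets `B ∪ {e}` for `B` a base of `M` and
`e ∈ M.E \ B` form the bases of a matroid `M⁺`, and `(M⁺)✶ = (M✶)⁻`. -/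
theorem Mplus_isMatroid_and_dual {α : Type*} (M : Matroid α) (h : ¬ M.IsBase M.E) :
    ∃ Mp : Matroid α, Mp.E = M.E ∧
      (∀ X, Mp.IsBase X ↔ ∃ B e, M.IsBase B ∧ e ∈ M.E \ B ∧ X = insert e B) ∧
      (∀ X, Mp✶.IsBase X ↔ ∃ B e, M✶.IsBase B ∧ e ∈ B ∧ X = B \ {e}) := by
  refine ⟨(MpInd M h).matroid, rfl, fun X ↦ ?_, fun X ↦ ?_⟩
  · rw [IndepMatroid.matroid_IsBase]
    exact maximal_indep'_iff h
  · have hbase : ∀ Y, (MpInd M h).matroid.IsBase Y ↔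
        ∃ B e, M.IsBase B ∧ e ∈ M.E \ B ∧ Y = insert e B := by
      intro Y; rw [IndepMatroid.matroid_IsBase]; exact maximal_indep'_iff h
    have hE : (MpInd M h).matroid.E = M.E := rfl
    rw [Matroid.dual_isBase_iff', hE, hbase]
    constructor
    · rintro ⟨⟨B, e, hB, he, hEq⟩, hXE⟩
      refine ⟨M.E \ B, e, ?_, he, ?_⟩
      · rw [Matroid.dual_isBase_iff diff_subset,
          diff_diff_cancel_left hB.subset_ground]
        exact hB
      · rw [eq_comm, diff_diff, union_singleton, ← hEq,
          diff_diff_cancel_left hXE]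
    · rintro ⟨B, e, hBd, heB, rfl⟩
      have hBE : B ⊆ M.E := hBd.subset_ground
      have heE : e ∈ M.E := hBE heB
      have hMB : M.IsBase (M.E \ B) := (Matroid.dual_isBase_iff hBE).1 hBd
      refine ⟨⟨M.E \ B, e, hMB, ⟨heE, fun hc ↦ hc.2 heB⟩, ?_⟩,
        diff_subset.trans hBE⟩
      ext x
      by_cases hxe : x = e <;> simp [hxe, heE, heB]
end

section
/- Let M be a matroid in which ∅ is not a base and let O be a circuit of M⁻. Then either O is a base of M, or O is a circuit of M that does not include a base of M. Conversely, every base of M, and every circuit of M not including a base of M, is a circuit of M⁻. -/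
/-- A circuit: a minimal dependent set. -/
def Matroid.IsCircuit' {α : Type*} (M : Matroid α) (C : Set α) : Prop :=
  M.Dep C ∧ ∀ ⦃D⦄, M.Dep D → D ⊆ C → D = C

/-- Let `Mm = M⁻` be the matroid whose bases are the sets `B \ {e}` for `B` a base of `M` and
`e ∈ B` (where `∅` is not a base of `M`). Then a set `O` is a circuit of `M⁻` if and only if it is
a base of `M`, or a circuit of `M` that does not include a base of `M`. -/
theorem circuits_of_Mminus {α : Type*} (M Mm : Matroid α) (hempty : ¬ M.IsBase ∅)
    (hE : Mm.E = M.E)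
    (hB : ∀ X, Mm.IsBase X ↔ ∃ B e, M.IsBase B ∧ e ∈ B ∧ X = B \ {e}) :
    ∀ O, Mm.IsCircuit' O ↔
      (M.IsBase O ∨ (M.IsCircuit' O ∧ ¬ ∃ B ⊆ O, M.IsBase B)) := by
  -- Key: independence in Mm
  have hI : ∀ X, Mm.Indep X ↔ M.Indep X ∧ ¬ M.IsBase X := by
    intro X
    constructor
    · intro h
      obtain ⟨Y, hY, hXY⟩ := h.exists_isBase_superset
      obtain ⟨B, e, hBbase, heB, rfl⟩ := (hB Y).mp hY
      have hXB : X ⊆ B := hXY.trans Set.diff_subset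
      refine ⟨hBbase.indep.subset hXB, fun hXbase => ?_⟩
      have := hXbase.eq_of_subset_isBase hBbase hXB
      exact (hXY (this ▸ heB)).2 rfl
    · rintro ⟨hind, hnb⟩
      obtain ⟨B, hBbase, hXB⟩ := hind.exists_isBase_superset
      have hne : X ≠ B := fun h => hnb (h ▸ hBbase)
      obtain ⟨e, heB, heX⟩ := Set.exists_of_ssubset (hXB.ssubset_of_ne hne)
      have : Mm.IsBase (B \ {e}) := (hB _).mpr ⟨B, e, hBbase, heB, rfl⟩
      exact this.indep.subset (Set.subset_diff_singleton hXB heX)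
  intro O
  constructor
  · rintro ⟨hdep, hmin⟩
    have hOE : O ⊆ M.E := hE ▸ hdep.subset_ground
    have hni := hdep.not_indep
    rw [hI] at hni
    push_neg at hni
    by_cases hObase : M.IsBase O
    · exact Or.inl hObase
    · have hOdep : M.Dep O := (M.not_indep_iff hOE).mp fun h => hObase (hni h)
      refine Or.inr ⟨⟨hOdep, fun D hD hDO => ?_⟩, ?_⟩
      · -- D is Mm-dep
        have : Mm.Dep D := by
          rw [Matroid.dep_iff, hE]
          exact ⟨fun h => hD.not_indep ((hI D).mp h).1, hD.subset_ground⟩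
        exact hmin this hDO
      · rintro ⟨B, hBO, hBbase⟩
        have : Mm.Dep B := by
          rw [Matroid.dep_iff, hE]
          exact ⟨fun h => ((hI B).mp h).2 hBbase, hBbase.subset_ground⟩
        have := hmin this hBO
        exact hOdep.not_indep (this ▸ hBbase.indep)
  · rintro (hObase | ⟨⟨hOdep, hmin⟩, hnob⟩)
    · refine ⟨?_, ?_⟩
      · rw [Matroid.dep_iff, hE]
        exact ⟨fun h => ((hI O).mp h).2 hObase, hObase.subset_ground⟩
      · intro D hD hDO
        have hDind : M.Indep D := hObase.indep.subset hDO
        have hni := hD.not_indep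
        rw [hI] at hni
        push_neg at hni
        exact (hni hDind).eq_of_subset_isBase hObase hDO
    · refine ⟨?_, ?_⟩
      · rw [Matroid.dep_iff, hE]
        exact ⟨fun h => hOdep.not_indep ((hI O).mp h).1, hOdep.subset_ground⟩
      · intro D hD hDO
        have hDE : D ⊆ M.E := hDO.trans hOdep.subset_ground
        have hni := hD.not_indep
        rw [hI] at hni
        push_neg at hni
        by_cases hDind : M.Indep D
        · exact absurd ⟨D, hDO, hni hDind⟩ hnob
        · exact hmin ((M.not_indep_iff hDE).mp hDind) hDO
end

section
/- Let M be a matroid whose ground set is not a base, let O be a circuit of M, and let I ⊆ E(M) \ O. Then O ∪ I is independent in M⁺ if and only if I is independent in the contraction M/O. -/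
/-- Let `Mp = M⁺` (bases `B + e` with `B` a base of `M`, `e ∉ B`; the ground set is not a base),
let `O` be a circuit of `M`, let `MC = M/O` be the contraction of `M` by `O`, and let
`I ⊆ E(M) \ O`. Then `O ∪ I` is independent in `M⁺` iff `I` is independent in `M/O`. -/
theorem Mplus_indep_union_circuit_iff {α : Type*} (M Mp MC : Matroid α)
    (hEb : ¬ M.IsBase M.E) (hE : Mp.E = M.E)
    (hB : ∀ X, Mp.IsBase X ↔ ∃ B e, M.IsBase B ∧ e ∈ M.E \ B ∧ X = insert e B)
    (O : Set α) (hO : M.IsCircuit' O)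
    (hCE : MC.E = M.E \ O)
    (hCI : ∀ I, MC.Indep I ↔ Disjoint I O ∧ ∃ J, M.IsBasis J O ∧ M.Indep (I ∪ J))
    (I : Set α) (hI : I ⊆ M.E \ O) :
    Mp.Indep (O ∪ I) ↔ MC.Indep I := by
  obtain ⟨hOdep, hOmin⟩ := hO
  have hIO : Disjoint I O := Set.disjoint_left.2 fun x hx => (hI hx).2
  rw [hCI]
  constructor
  · rintro hind
    obtain ⟨X, hX, hsub⟩ := Matroid.indep_iff.1 hind
    obtain ⟨B, e, hBbase, ⟨heE, heB⟩, rfl⟩ := (hB X).1 hX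
    have heO : e ∈ O := by
      by_contra heO
      have hOB : O ⊆ B := fun x hx =>
        ((hsub (Set.mem_union_left _ hx)).resolve_left (fun h => heO (h ▸ hx)))
      exact hOdep.not_indep (hBbase.indep.subset hOB)
    have hIB : I ⊆ B := fun x hx =>
      ((hsub (Set.mem_union_right _ hx)).resolve_left
        (fun h => (hIO.ne_of_mem hx heO) h)
      )
    have hJB : O \ {e} ⊆ B := fun x hx =>
      ((hsub (Set.mem_union_left _ hx.1)).resolve_left (fun h => hx.2 h))
    have hJindep : M.Indep (O \ {e}) := hBbase.indep.subset hJB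
    refine ⟨hIO, O \ {e}, ?_, hBbase.indep.subset (Set.union_subset hIB hJB)⟩
    refine hJindep.isBasis_of_forall_insert Set.diff_subset (fun x hx => ?_)
    have hxe : x = e := by
      rcases hx with ⟨hxO, hxJ⟩
      by_contra h
      exact hxJ ⟨hxO, h⟩
    subst hxe
    have : insert x (O \ {x}) = O := Set.insert_diff_singleton.trans
      (Set.insert_eq_self.2 heO)
    rwa [this]
  · rintro ⟨-, J, hJ, hIJ⟩
    have hJne : J ≠ O := fun h => hOdep.not_indep (h ▸ hJ.indep)
    obtain ⟨e, heO, heJ⟩ : ∃ e, e ∈ O ∧ e ∉ J := by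
      by_contra h
      push_neg at h
      exact hJne (hJ.subset.antisymm h)
    have hdep : M.Dep (insert e J) := hJ.insert_dep ⟨heO, heJ⟩
    have heq : insert e J = O := hOmin hdep (Set.insert_subset heO hJ.subset)
    obtain ⟨B, hBbase, hIJB⟩ := hIJ.exists_isBase_superset
    have heB : e ∉ B := fun h => hdep.not_indep
      (hBbase.indep.subset (Set.insert_subset h
        (fun x hx => hIJB (Set.mem_union_right _ hx))))
    have hXbase : Mp.IsBase (insert e B) := (hB _).2 ⟨B, e, hBbase, ⟨hOdep.subset_ground heO, heB⟩, rfl⟩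
    refine Matroid.indep_iff.2 ⟨insert e B, hXbase, ?_⟩
    refine Set.union_subset ?_ (fun x hx => Set.mem_insert_of_mem _ (hIJB (Set.mem_union_left _ hx)))
    rw [← heq]
    exact Set.insert_subset_insert (fun x hx => hIJB (Set.mem_union_right _ hx))
end

section
/- Let M be a matroid whose ground set is not a base, let O₁ be a circuit of M and O₂ a circuit of M/O₁. Then O₁ ∪ O₂ is a circuit of M⁺. -/
open Set

/-- Proper subsets of a circuit are independent. -/
lemma Matroid.IsCircuit'.indep_of_ssubset {α : Type*} {M : Matroid α} {C X : Set α}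
    (hC : M.IsCircuit' C) (hX : X ⊆ C) (hne : X ≠ C) : M.Indep X := by
  by_contra h
  exact hne (hC.2 ((Matroid.not_indep_iff (hX.trans hC.1.subset_ground)).1 h) hX)

/-- For `z ∈ C` a circuit, `C \ {z}` is a basis of `C`. -/
lemma Matroid.IsCircuit'.diff_singleton_basis {α : Type*} {M : Matroid α} {C : Set α} {z : α}
    (hC : M.IsCircuit' C) (hz : z ∈ C) : M.IsBasis (C \ {z}) C := by
  have hind : M.Indep (C \ {z}) :=
    hC.indep_of_ssubset diff_subset (fun h => (h ▸ (fun (hh : z ∈ C \ {z}) => hh.2 rfl)) hz)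
  refine hind.isBasis_of_forall_insert diff_subset ?_
  intro e he
  have : e = z := by
    by_contra hez
    exact he.2 ⟨he.1, hez⟩
  subst this
  rw [insert_diff_singleton, insert_eq_of_mem hz]
  exact hC.1

/-- Every basis of a circuit `C` has the form `C \ {z}`. -/
lemma Matroid.IsCircuit'.basis_eq_diff_singleton {α : Type*} {M : Matroid α} {C J : Set α}
    (hC : M.IsCircuit' C) (hJ : M.IsBasis J C) : ∃ z ∈ C, J = C \ {z} := by
  have hJC : J ⊆ C := hJ.subset
  have hne : J ≠ C := fun h => hC.1.1 (h ▸ hJ.indep)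
  obtain ⟨z, hzC, hzJ⟩ : ∃ z ∈ C, z ∉ J := by
    by_contra h
    push_neg at h
    exact hne (hJC.antisymm h)
  refine ⟨z, hzC, hJ.eq_of_subset_indep
    (hC.indep_of_ssubset diff_subset (fun h => (h ▸ (fun (hh : z ∈ C \ {z}) => hh.2 rfl)) hzC))
    (fun a ha => ⟨hJC ha, fun h => hzJ (h ▸ ha)⟩) diff_subset⟩

/-- Exchange: if `I ∪ (C \ {z})` is independent with `C` a circuit disjoint from `I`,
then `I ∪ (C \ {y})` is independent for any `y ∈ C`. -/
lemma Matroid.IsCircuit'.exchange {α : Type*} {M : Matroid α} {C I : Set α}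
    (hC : M.IsCircuit' C) (hdis : Disjoint I C) {y z : α} (hy : y ∈ C) (hz : z ∈ C)
    (h : M.Indep (I ∪ C \ {z})) : M.Indep (I ∪ C \ {y}) := by
  rcases eq_or_ne y z with rfl | hne
  · exact h
  set T := I ∪ C \ {y, z} with hTdef
  have hTsub : T ⊆ I ∪ C \ {z} :=
    union_subset_union_right _ (diff_subset_diff_right (by simp))
  have hT : M.Indep T := h.subset hTsub
  have hyI : y ∉ I := fun hyI => (hdis.ne_of_mem hyI hy) rfl
  have hzI : z ∉ I := fun hzI => (hdis.ne_of_mem hzI hz) rfl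
  have hyT : y ∉ T := by
    rintro (h1 | h2)
    · exact hyI h1
    · exact h2.2 (mem_insert _ _)
  have hzT : z ∉ T := by
    rintro (h1 | h2)
    · exact hzI h1
    · exact h2.2 (mem_insert_of_mem _ rfl)
  have hins_y : insert y T = I ∪ C \ {z} := by
    ext a
    simp only [hTdef, mem_insert_iff, mem_union, mem_diff, mem_singleton_iff]
    constructor
    · rintro (rfl | h | ⟨h1, h2⟩)
      · exact Or.inr ⟨hy, hne⟩
      · exact Or.inl h
      · exact Or.inr ⟨h1, fun hh => h2 (by simp [hh])⟩
    · rintro (h | ⟨h1, h2⟩)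
      · exact Or.inr (Or.inl h)
      · rcases eq_or_ne a y with rfl | hay
        · exact Or.inl rfl
        · exact Or.inr (Or.inr ⟨h1, by simp [hay, h2]⟩)
  have hins_z : insert z T = I ∪ C \ {y} := by
    ext a
    simp only [hTdef, mem_insert_iff, mem_union, mem_diff, mem_singleton_iff]
    constructor
    · rintro (rfl | h | ⟨h1, h2⟩)
      · exact Or.inr ⟨hz, hne.symm⟩
      · exact Or.inl h
      · exact Or.inr ⟨h1, fun hh => h2 (by simp [hh])⟩
    · rintro (h | ⟨h1, h2⟩)
      · exact Or.inr (Or.inl h)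
      · rcases eq_or_ne a z with rfl | haz
        · exact Or.inl rfl
        · exact Or.inr (Or.inr ⟨h1, by simp [h2, haz]⟩)
  have hyE : y ∈ M.E := hC.1.subset_ground hy
  have hzE : z ∈ M.E := hC.1.subset_ground hz
  have hyncl : y ∉ M.closure T :=
    (hT.notMem_closure_iff_of_notMem hyT hyE).2 (hins_y ▸ h)
  have hzncl : z ∉ M.closure T := by
    intro hzcl
    have h1 : M.closure (insert z T) = M.closure T :=
      Matroid.closure_insert_eq_of_mem_closure hzcl
    have hCy_indep : M.Indep (C \ {y}) :=
      hC.indep_of_ssubset diff_subset (fun h => (h ▸ (fun (hh : y ∈ C \ {y}) => hh.2 rfl)) hy)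
    have hyy : y ∈ M.closure (C \ {y}) := by
      rw [hCy_indep.mem_closure_iff_of_notMem (fun hh => hh.2 rfl)]
      rw [insert_diff_singleton, insert_eq_of_mem hy]
      exact hC.1
    have hsub : C \ {y} ⊆ insert z T := by
      rw [hins_z]
      exact (subset_union_right)
    have h2 : y ∈ M.closure (insert z T) := M.closure_subset_closure hsub hyy
    exact hyncl (h1 ▸ h2)
  have : M.Indep (insert z T) :=
    (hT.insert_indep_iff_of_notMem hzT).2 ⟨hzE, hzncl⟩
  rwa [hins_z] at this

/-- Let `Mp = M⁺` (bases `B + e` with `B` a base of `M`, `e ∉ B`; the ground set is not a base),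
let `O₁` be a circuit of `M` and `O₂` a circuit of the contraction `MC = M/O₁`. Then `O₁ ∪ O₂`
is a circuit of `M⁺`. -/
theorem union_circuit_of_Mplus {α : Type*} (M Mp MC : Matroid α)
    (hEb : ¬ M.IsBase M.E) (hE : Mp.E = M.E)
    (hB : ∀ X, Mp.IsBase X ↔ ∃ B e, M.IsBase B ∧ e ∈ M.E \ B ∧ X = insert e B)
    (O₁ : Set α) (hO₁ : M.IsCircuit' O₁)
    (hCE : MC.E = M.E \ O₁)
    (hCI : ∀ I, MC.Indep I ↔ Disjoint I O₁ ∧ ∃ J, M.IsBasis J O₁ ∧ M.Indep (I ∪ J))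
    (O₂ : Set α) (hO₂ : MC.IsCircuit' O₂) :
    Mp.IsCircuit' (O₁ ∪ O₂) := by
  classical
  have hO₁d := hO₁.1
  have hO₂d := hO₂.1
  have hO₁E : O₁ ⊆ M.E := hO₁d.subset_ground
  have hO₂E' : O₂ ⊆ M.E \ O₁ := hCE ▸ hO₂d.subset_ground
  have hO₂E : O₂ ⊆ M.E := fun x hx => (hO₂E' hx).1
  have hdis : Disjoint O₂ O₁ := disjoint_left.2 fun x hx => (hO₂E' hx).2
  -- ground set is never equal to a base of M, so every base misses some element
  have exists_e : ∀ B, M.IsBase B → ∃ e, e ∈ M.E \ B := by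
    intro B hBa
    by_contra h
    push_neg at h
    have hBE : B = M.E :=
      hBa.subset_ground.antisymm (fun x hx => by_contra fun hxB => h x ⟨hx, hxB⟩)
    exact hEb (hBE ▸ hBa)
  -- M-independent sets are Mp-independent
  have hMpIndep : ∀ X, M.Indep X → Mp.Indep X := by
    intro X hX
    obtain ⟨B, hBa, hXB⟩ := hX.exists_isBase_superset
    obtain ⟨e, he⟩ := exists_e B hBa
    have hb : Mp.IsBase (insert e B) := (hB _).2 ⟨B, e, hBa, he, rfl⟩
    exact hb.indep.subset (hXB.trans (subset_insert _ _))
  -- sets that become M-independent after removing one ground element are Mp-independent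
  have hMpIndep' : ∀ X (x : α), x ∈ M.E → M.Indep (X \ {x}) → Mp.Indep X := by
    intro X x hxE hX
    obtain ⟨B, hBa, hXB⟩ := hX.exists_isBase_superset
    by_cases hxB : x ∈ B
    · exact hMpIndep X (hBa.indep.subset (fun a ha =>
        if h : a = x then h ▸ hxB else hXB ⟨ha, h⟩))
    · have hb : Mp.IsBase (insert x B) := (hB _).2 ⟨B, x, hBa, ⟨hxE, hxB⟩, rfl⟩
      exact hb.indep.subset (fun a ha =>
        if h : a = x then h ▸ mem_insert _ _ else mem_insert_of_mem _ (hXB ⟨ha, h⟩))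
  constructor
  · -- O₁ ∪ O₂ is Mp-dependent
    refine ⟨?_, hE ▸ union_subset hO₁E hO₂E⟩
    intro h
    obtain ⟨X, hX, hsub⟩ := h.exists_isBase_superset
    obtain ⟨B, e, hBa, he, rfl⟩ := (hB X).1 hX
    have hsub' : (O₁ ∪ O₂) \ {e} ⊆ B := by
      rintro a ⟨ha, hae⟩
      rcases hsub ha with h1 | h2
      · exact absurd h1 hae
      · exact h2
    have hind : M.Indep ((O₁ ∪ O₂) \ {e}) := hBa.indep.subset hsub'
    by_cases heO₁ : e ∈ O₁
    · have heO₂ : e ∉ O₂ := fun hh => (hdis.ne_of_mem hh heO₁) rfl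
      have hJ : M.IsBasis (O₁ \ {e}) O₁ := hO₁.diff_singleton_basis heO₁
      have heq : O₂ ∪ O₁ \ {e} = (O₁ ∪ O₂) \ {e} := by
        ext a
        simp only [mem_union, mem_diff, mem_singleton_iff]
        constructor
        · rintro (h1 | ⟨h1, h2⟩)
          · exact ⟨Or.inr h1, fun hh => heO₂ (hh ▸ h1)⟩
          · exact ⟨Or.inl h1, h2⟩
        · rintro ⟨h1 | h1, h2⟩
          · exact Or.inr ⟨h1, h2⟩
          · exact Or.inl h1
      have : MC.Indep O₂ := (hCI O₂).2 ⟨hdis, O₁ \ {e}, hJ, by rwa [heq]⟩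
      exact hO₂d.1 this
    · have : O₁ ⊆ (O₁ ∪ O₂) \ {e} :=
        fun a ha => ⟨Or.inl ha, fun h => heO₁ (h ▸ ha)⟩
      exact hO₁d.1 (hind.subset this)
  · -- minimality
    intro D hD hDsub
    by_contra hne
    obtain ⟨y, hyU, hyD⟩ := exists_of_ssubset (hDsub.ssubset_of_ne hne)
    by_cases hO₂D : O₂ ⊆ D
    · -- O₂ ⊆ D, so y ∈ O₁; remove some x ∈ O₂ from D
      have hyO₁ : y ∈ O₁ := by
        rcases hyU with h | h
        · exact h
        · exact absurd (hO₂D h) hyD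
      obtain ⟨x, hx⟩ := hO₂d.nonempty
      have hxD : x ∈ D := hO₂D hx
      have hI2 : MC.Indep (O₂ \ {x}) := by
        have hsubE : O₂ \ {x} ⊆ MC.E := diff_subset.trans hO₂d.subset_ground
        have hnd : ¬ MC.Dep (O₂ \ {x}) := by
          intro hdep
          have heq : O₂ \ {x} = O₂ := hO₂.2 hdep diff_subset
          rw [← heq] at hx
          exact hx.2 rfl
        exact (Matroid.not_dep_iff hsubE).1 hnd
      obtain ⟨hdis2, J, hJ, hIJ⟩ := (hCI _).1 hI2
      obtain ⟨z, hz, rfl⟩ := hO₁.basis_eq_diff_singleton hJ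
      have h2 : M.Indep (O₂ \ {x} ∪ O₁ \ {y}) := hO₁.exchange hdis2 hyO₁ hz hIJ
      have hDx : D \ {x} ⊆ O₂ \ {x} ∪ O₁ \ {y} := by
        rintro a ⟨haD, hax⟩
        rcases hDsub haD with h1 | h1
        · exact Or.inr ⟨h1, fun h => hyD (h ▸ haD)⟩
        · exact Or.inl ⟨h1, hax⟩
      exact hD.1 (hMpIndep' D x (hO₂E hx) (h2.subset hDx))
    · -- some w ∈ O₂ is missing from D
      obtain ⟨w, hwO₂, hwD⟩ := not_subset.1 hO₂D
      have hI2 : MC.Indep (D ∩ O₂) := by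
        have hsubE : D ∩ O₂ ⊆ MC.E := inter_subset_right.trans hO₂d.subset_ground
        have hnd : ¬ MC.Dep (D ∩ O₂) := by
          intro hdep
          have heq : D ∩ O₂ = O₂ := hO₂.2 hdep inter_subset_right
          rw [← heq] at hwO₂
          exact hwD hwO₂.1
        exact (Matroid.not_dep_iff hsubE).1 hnd
      obtain ⟨hdis2, J, hJ, hIJ⟩ := (hCI _).1 hI2
      obtain ⟨z, hz, rfl⟩ := hO₁.basis_eq_diff_singleton hJ
      have hDz : D \ {z} ⊆ D ∩ O₂ ∪ O₁ \ {z} := by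
        rintro a ⟨haD, haz⟩
        rcases hDsub haD with h1 | h1
        · exact Or.inr ⟨h1, haz⟩
        · exact Or.inl ⟨haD, h1⟩
      exact hD.1 (hMpIndep' D z (hO₁E hz) (hIJ.subset hDz))
end

section
/- Let M be a matroid whose ground set is not a base and let O be a circuit of M⁺. Then there exist a circuit O₁ of M and a circuit O₂ of M/O₁ with O = O₁ ∪ O₂ and O₁ ∩ O₂ = ∅. -/
open Set

/-- Fundamental circuit existence: if `J` is independent and `e ∈ cl(J) \ J`, then
`insert e J` contains a circuit. -/
lemma exists_circuit'_subset_insert {α : Type*} (M : Matroid α) {J : Set α} {e : α}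
    (hJ : M.Indep J) (he : e ∈ M.closure J) (heJ : e ∉ J) :
    ∃ C, M.IsCircuit' C ∧ C ⊆ insert e J := by
  classical
  set S : Set α := {y ∈ J | e ∈ M.closure (J \ {y})} with hS
  have hJS : M.Indep (J \ S) := hJ.subset diff_subset
  have hecl : e ∈ M.closure (J \ S) := by
    rcases eq_empty_or_nonempty S with h0 | hne
    · rwa [h0, diff_empty]
    · have hJs : J \ S = ⋂₀ ((fun y => J \ {y}) '' S) := by
        ext z
        simp only [mem_diff, sInter_image, mem_iInter, mem_singleton_iff]
        constructor
        · rintro ⟨hz, hzS⟩ y hy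
          exact ⟨hz, fun h => hzS (h ▸ hy)⟩
        · intro h
          obtain ⟨y0, hy0⟩ := hne
          refine ⟨(h y0 hy0).1, fun hzS => (h z hzS).2 rfl⟩
      rw [hJs, hJ.closure_sInter_eq_biInter_closure_of_forall_subset
        (hne.image _) (by rintro _ ⟨y, hy, rfl⟩; exact diff_subset)]
      simp only [mem_iInter]
      rintro _ ⟨y, hy, rfl⟩
      exact hy.2
  have heE : e ∈ M.E := M.closure_subset_ground _ hecl
  have hdep : M.Dep (insert e (J \ S)) := by
    rw [hJS.insert_dep_iff]
    exact ⟨hecl, fun h => heJ h.1⟩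
  refine ⟨insert e (J \ S), ⟨hdep, ?_⟩, insert_subset_insert diff_subset⟩
  intro D hD hDC
  by_contra hne'
  -- D is a proper subset of insert e (J \ S)
  have heD : e ∈ D := by
    by_contra heD
    have : D ⊆ J \ S := fun z hz => (hDC hz).resolve_left (fun h => heD (h ▸ hz))
    exact hD.1 (hJS.subset this)
  obtain ⟨y, hyC, hyD⟩ : ∃ y, y ∈ insert e (J \ S) ∧ y ∉ D := by
    by_contra h
    push_neg at h
    exact hne' (hDC.antisymm h)
  have hye : y ≠ e := fun h => hyD (h ▸ heD)
  have hyJS : y ∈ J \ S := (hyC.resolve_left hye)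
  have hyS : e ∉ M.closure (J \ {y}) := fun h => hyJS.2 ⟨hyJS.1, h⟩
  have hind : M.Indep (insert e (J \ {y})) := by
    rw [(hJ.subset diff_subset).insert_indep_iff_of_notMem (fun h => heJ h.1)]
    exact ⟨heE, hyS⟩
  have hsub : D ⊆ insert e (J \ {y}) := by
    intro z hz
    rcases hDC hz with rfl | hzJS
    · exact mem_insert _ _
    · exact mem_insert_of_mem _ ⟨hzJS.1, fun h => hyD (h ▸ hz)⟩
  exact hD.1 (hind.subset hsub)

/-- Let `Mp = M⁺` (bases `B + e` with `B` a base of `M`, `e ∉ B`; the ground set is not a base),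
and let `con C` denote the contraction `M/C`. Then every circuit `O` of `M⁺` is the disjoint
union of a circuit `O₁` of `M` and a circuit `O₂` of `M/O₁`. -/
theorem circuit_of_Mplus_decomposes {α : Type*} (M Mp : Matroid α)
    (hEb : ¬ M.IsBase M.E) (hE : Mp.E = M.E)
    (hB : ∀ X, Mp.IsBase X ↔ ∃ B e, M.IsBase B ∧ e ∈ M.E \ B ∧ X = insert e B)
    (con : Set α → Matroid α)
    (hcon : ∀ C ⊆ M.E, (con C).E = M.E \ C ∧
      ∀ I, (con C).Indep I ↔ Disjoint I C ∧ ∃ J, M.IsBasis J C ∧ M.Indep (I ∪ J))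
    (O : Set α) (hO : Mp.IsCircuit' O) :
    ∃ O₁ O₂, M.IsCircuit' O₁ ∧ (con O₁).IsCircuit' O₂ ∧
      O = O₁ ∪ O₂ ∧ O₁ ∩ O₂ = ∅ := by
  classical
  have hOE : O ⊆ M.E := hE ▸ hO.1.subset_ground
  -- Mp-independence characterization
  have hMpInd : ∀ X : Set α, Mp.Indep X ↔
      ∃ B e, M.IsBase B ∧ e ∈ M.E \ B ∧ X ⊆ insert e B := by
    intro X
    rw [Matroid.indep_iff]
    constructor
    · rintro ⟨Bb, hBb, hXB⟩
      obtain ⟨B, e, hBM, heB, rfl⟩ := (hB Bb).1 hBb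
      exact ⟨B, e, hBM, heB, hXB⟩
    · rintro ⟨B, e, hBM, heB, hXB⟩
      exact ⟨insert e B, (hB _).2 ⟨B, e, hBM, heB, rfl⟩, hXB⟩
  -- any M-base misses some point of the ground set
  have hmiss : ∀ B, M.IsBase B → ∃ e, e ∈ M.E \ B := by
    intro B hBM
    by_contra h
    push_neg at h
    have hsubEB : M.E ⊆ B := fun x hx => by_contra fun hxB => (h x ⟨hx, hxB⟩)
    have hEB : M.E = B := hsubEB.antisymm hBM.subset_ground
    exact hEb (by rw [hEB]; exact hBM)
  -- any M-independent subset of the ground set is Mp-independent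
  have hIndUp : ∀ X, M.Indep X → Mp.Indep X := by
    intro X hX
    obtain ⟨B, hBM, hXB⟩ := hX.exists_isBase_superset
    obtain ⟨e, he⟩ := hmiss B hBM
    exact (hMpInd X).2 ⟨B, e, hBM, he, hXB.trans (subset_insert _ _)⟩
  -- O is M-dependent
  have hMdepO : M.Dep O := by
    rw [Matroid.dep_iff]
    exact ⟨fun h => hO.1.not_indep (hIndUp O h), hOE⟩
  -- proper subsets of O are Mp-independent
  have hproper : ∀ x ∈ O, Mp.Indep (O \ {x}) := by
    intro x hx
    by_contra h
    have hdep : Mp.Dep (O \ {x}) :=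
      ⟨h, (diff_subset.trans hOE).trans hE.symm.subset⟩
    have heq : O \ {x} = O := hO.2 hdep diff_subset
    have : x ∈ O \ {x} := heq.symm ▸ hx
    exact this.2 rfl
  -- find a circuit O₁ of M inside O
  obtain ⟨I, hI⟩ := M.exists_isBasis O hOE
  obtain ⟨x, hxO, hxI⟩ : ∃ x, x ∈ O ∧ x ∉ I := by
    by_contra h
    push_neg at h
    have hIO : I = O := hI.subset.antisymm h
    exact hMdepO.not_indep (hIO ▸ hI.indep)
  obtain ⟨O₁, hO₁, hO₁sub⟩ :=
    exists_circuit'_subset_insert M hI.indep (hI.subset_closure hxO) hxI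
  have hO₁O : O₁ ⊆ O := hO₁sub.trans (insert_subset hxO hI.subset)
  have hO₁E : O₁ ⊆ M.E := hO₁O.trans hOE
  obtain ⟨hconE, hconInd⟩ := hcon O₁ hO₁E
  set O₂ : Set α := O \ O₁ with hO₂def
  -- proper subsets of the circuit O₁ are independent
  have hO₁ps : ∀ f ∈ O₁, M.Indep (O₁ \ {f}) := by
    intro f hf
    by_contra h
    have heq : O₁ \ {f} = O₁ :=
      hO₁.2 ⟨h, diff_subset.trans hO₁E⟩ diff_subset
    have hmem : f ∈ O₁ \ {f} := heq.symm ▸ hf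
    exact hmem.2 rfl
  -- O₁ \ {f} is a basis of O₁ for each f ∈ O₁
  have hO₁basis : ∀ f ∈ O₁, M.IsBasis (O₁ \ {f}) O₁ := by
    intro f hf
    rw [Matroid.isBasis_iff (hX := hO₁E)]
    refine ⟨hO₁ps f hf, diff_subset, fun J hJ hsub hJO₁ => ?_⟩
    by_contra hne
    have hfJ : f ∈ J := by
      by_contra hfJ
      exact hne ((subset_diff_singleton hJO₁ hfJ).antisymm hsub).symm
    have : J = O₁ := by
      apply subset_antisymm hJO₁
      intro z hz
      rcases eq_or_ne z f with rfl | hzf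
      · exact hfJ
      · exact hsub ⟨hz, hzf⟩
    exact hO₁.1.not_indep (this ▸ hJ)
  -- O₂ is dependent in (con O₁)
  have hO₂dep : (con O₁).Dep O₂ := by
    rw [Matroid.dep_iff, hconE]
    refine ⟨?_, fun z hz => ⟨hOE hz.1, hz.2⟩⟩
    intro hind
    obtain ⟨-, J, hJbasis, hJind⟩ := (hconInd O₂).1 hind
    -- J = O₁ \ {f} for some f
    have hJne : J ≠ O₁ := fun h => hO₁.1.not_indep (h ▸ hJbasis.indep)
    obtain ⟨f, hfO₁, hfJ⟩ : ∃ f, f ∈ O₁ ∧ f ∉ J := by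
      by_contra h
      push_neg at h
      exact hJne (hJbasis.subset.antisymm h)
    have hJeq : J = O₁ \ {f} :=
      (hJbasis.eq_of_subset_indep (hO₁ps f hfO₁)
        (subset_diff_singleton hJbasis.subset hfJ) diff_subset)
    have hOf : M.Indep (O \ {f}) := by
      have : O₂ ∪ J = O \ {f} := by
        rw [hJeq, hO₂def]
        ext z
        simp only [mem_union, mem_diff, mem_singleton_iff]
        constructor
        · rintro (⟨hz, hz1⟩ | ⟨hz1, hzf⟩)
          · exact ⟨hz, fun h => hz1 (h ▸ hfO₁)⟩
          · exact ⟨hO₁O hz1, hzf⟩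
        · rintro ⟨hz, hzf⟩
          by_cases hz1 : z ∈ O₁
          · exact Or.inr ⟨hz1, hzf⟩
          · exact Or.inl ⟨hz, hz1⟩
      rwa [this] at hJind
    obtain ⟨B, hBM, hOB⟩ := hOf.exists_isBase_superset
    by_cases hfB : f ∈ B
    · obtain ⟨e, he⟩ := hmiss B hBM
      have : O ⊆ insert e B := by
        intro z hz
        rcases eq_or_ne z f with rfl | hzf
        · exact mem_insert_of_mem _ hfB
        · exact mem_insert_of_mem _ (hOB ⟨hz, hzf⟩)
      exact hO.1.not_indep ((hMpInd O).2 ⟨B, e, hBM, he, this⟩)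
    · have : O ⊆ insert f B := by
        intro z hz
        rcases eq_or_ne z f with rfl | hzf
        · exact mem_insert _ _
        · exact mem_insert_of_mem _ (hOB ⟨hz, hzf⟩)
      exact hO.1.not_indep
        ((hMpInd O).2 ⟨B, f, hBM, ⟨hOE (hO₁O hfO₁), hfB⟩, this⟩)
  -- for each x ∈ O₂, O₂ \ {x} is independent in (con O₁)
  have hO₂ps : ∀ x ∈ O₂, (con O₁).Indep (O₂ \ {x}) := by
    intro x hx
    obtain ⟨B, e₀, hBM, he₀, hsub⟩ := (hMpInd _).1 (hproper x hx.1)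
    have hO₁x : O₁ ⊆ O \ {x} := subset_diff_singleton hO₁O hx.2
    have he₀O₁ : e₀ ∈ O₁ := by
      by_contra he₀O₁
      have : O₁ ⊆ B := fun z hz =>
        ((hsub (hO₁x hz)).resolve_left (fun h => he₀O₁ (h ▸ hz)))
      exact hO₁.1.not_indep (hBM.indep.subset this)
    refine (hconInd _).2 ⟨disjoint_left.2 (fun z hz => hz.1.2), O₁ \ {e₀},
      hO₁basis e₀ he₀O₁, hBM.indep.subset ?_⟩
    intro z hz
    obtain ⟨hz1, hz2⟩ | ⟨hz1, hz2⟩ := hz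
    · exact ((hsub ⟨hz1.1, hz2⟩).resolve_left (fun h => hz1.2 (h ▸ he₀O₁)))
    · exact ((hsub (hO₁x hz1)).resolve_left (fun h => hz2 (h ▸ rfl)))
  refine ⟨O₁, O₂, hO₁, ⟨hO₂dep, ?_⟩, (union_diff_cancel hO₁O).symm,
    by rw [hO₂def]; exact inter_diff_self O₁ O⟩
  intro D hD hDO₂
  by_contra hne
  obtain ⟨y, hyO₂, hyD⟩ : ∃ y, y ∈ O₂ ∧ y ∉ D := by
    by_contra h
    push_neg at h
    exact hne (hDO₂.antisymm h)
  exact hD.not_indep ((hO₂ps y hyO₂).subset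
    (subset_diff_singleton hDO₂ hyD))
end

section
/- Let M be a matroid whose ground set is not a base, such that (1) M contains at least two circuits, and (2) M has a base B and a circuit O with O \ B infinite. Then M⁺ is wild: it has a circuit C and a cocircuit D with C ∩ D infinite. -/
open Set

namespace Matroid

variable {α : Type*} {N : Matroid α} {C C₁ C₂ I D : Set α} {a e : α}

lemma IsCircuit'.diff_singleton_indep (h : N.IsCircuit' C) (ha : a ∈ C) :
    N.Indep (C \ {a}) := by
  by_contra hind
  have hdep : N.Dep (C \ {a}) := ⟨hind, diff_subset.trans h.1.subset_ground⟩
  have := h.2 hdep diff_subset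
  rw [← this] at ha
  exact ha.2 rfl

lemma IsCircuit'.mem_closure (h : N.IsCircuit' C) (ha : a ∈ C) :
    a ∈ N.closure (C \ {a}) := by
  have hi := h.diff_singleton_indep ha
  have hd : N.Dep (insert a (C \ {a})) := by
    rw [insert_diff_singleton, insert_eq_of_mem ha]; exact h.1
  exact (hi.insert_dep_iff.1 hd).1

/-- Every dependent set contains a circuit. -/
lemma exists_isCircuit'_subset (hD : N.Dep D) : ∃ C, C ⊆ D ∧ N.IsCircuit' C := by
  obtain ⟨I, hI⟩ := N.exists_isBasis D hD.subset_ground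
  have hID : I ⊆ D := hI.subset
  obtain ⟨x, hxD, hxI⟩ : ∃ x, x ∈ D ∧ x ∉ I := by
    by_contra h
    push_neg at h
    exact hD.not_indep ((subset_antisymm h hID) ▸ hI.indep)
  set C : Set α := insert x {y ∈ I | N.Indep (insert x (I \ {y}))} with hCdef
  have hCsub : C ⊆ D := insert_subset hxD ((sep_subset _ _).trans hID)
  have hCE : C ⊆ N.E := hCsub.trans hD.subset_ground
  have hRE : insert x I ⊆ N.E := insert_subset (hD.subset_ground hxD) (hID.trans hD.subset_ground)
  have hCR : C ⊆ insert x I := insert_subset_insert (sep_subset _ _)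
  have hIbasis : N.IsBasis I (insert x I) :=
    hI.isBasis_subset (subset_insert x I) (insert_subset hxD hID)
  -- C is dependent
  have hCdep : N.Dep C := by
    rw [← not_indep_iff hCE]
    intro hCind
    obtain ⟨B', hB', hCB'⟩ := hCind.subset_isBasis_of_subset hCR hRE
    obtain ⟨z, hzI, hzB'⟩ : ∃ z, z ∈ I ∧ z ∉ B' := by
      by_contra h
      push_neg at h
      have hxB' : x ∈ B' := hCB' (mem_insert _ _)
      have : B' = insert x I := subset_antisymm hB'.subset (insert_subset hxB' h)
      exact (hIbasis.insert_dep ⟨mem_insert _ _, hxI⟩).not_indep (this ▸ hB'.indep)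
    obtain ⟨f, hf, hfB⟩ := hIbasis.isBase_restrict.exchange hB'.isBase_restrict ⟨hzI, hzB'⟩
    have hfx : f = x := by
      have := hB'.subset hf.1
      rcases this with h | h
      · exact h
      · exact absurd h hf.2
    subst hfx
    have hind : N.Indep (insert f (I \ {z})) := ((restrict_indep_iff).1 hfB.indep).1
    exact hzB' (hCB' (Or.inr ⟨hzI, hind⟩))
  refine ⟨C, hCsub, hCdep, ?_⟩
  intro D' hD' hsub
  refine subset_antisymm hsub fun y hy => ?_
  by_contra hyD'
  rcases hy with rfl | ⟨hyI, hyind⟩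
  · have : D' ⊆ I := fun a ha => by
      rcases hsub ha with rfl | h
      · exact absurd ha hyD'
      · exact h.1
    exact hD'.not_indep (hI.indep.subset this)
  · have : D' ⊆ insert x (I \ {y}) := fun a ha => by
      rcases hsub ha with rfl | h
      · exact mem_insert _ _
      · exact Or.inr ⟨h.1, fun hay => hyD' (hay ▸ ha)⟩
    exact hD'.not_indep (hyind.subset this)

/-- A set of the form `insert e I` with `I` independent contains at most one circuit. -/
lemma circuit_subset_of_subset_insert (hI : N.Indep I) (h₁ : N.IsCircuit' C₁)
    (h₂ : N.IsCircuit' C₂) (hs₁ : C₁ ⊆ insert e I) (hs₂ : C₂ ⊆ insert e I) : C₁ ⊆ C₂ := by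
  intro a ha
  by_contra haC₂
  have heC₂ : e ∈ C₂ := by
    by_contra heC₂
    have : C₂ ⊆ I := fun b hb => (hs₂ hb).resolve_left fun h => heC₂ (h ▸ hb)
    exact h₂.1.not_indep (hI.subset this)
  have hae : a ≠ e := fun h => haC₂ (h.symm ▸ heC₂)
  have haI : a ∈ I := (hs₁ ha).resolve_left hae
  have hecl : e ∈ N.closure (I \ {a}) := by
    have h1 := h₂.mem_closure heC₂
    have h2 : C₂ \ {e} ⊆ I \ {a} := fun b hb =>
      ⟨(hs₂ hb.1).resolve_left hb.2, fun h => haC₂ (h ▸ hb.1)⟩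
    exact (N.closure_subset_closure h2) h1
  have hacl : a ∈ N.closure (I \ {a}) := by
    have h1 := h₁.mem_closure ha
    have h2 : C₁ \ {a} ⊆ insert e (I \ {a}) := fun b hb => by
      rcases hs₁ hb.1 with h | h
      · exact Or.inl h
      · exact Or.inr ⟨h, hb.2⟩
    have h3 := (N.closure_subset_closure h2) h1
    rwa [closure_insert_eq_of_mem_closure hecl] at h3
  exact hI.notMem_closure_diff_of_mem haI hacl

lemma circuit_unique_of_subset_insert (hI : N.Indep I) (h₁ : N.IsCircuit' C₁)
    (h₂ : N.IsCircuit' C₂) (hs₁ : C₁ ⊆ insert e I) (hs₂ : C₂ ⊆ insert e I) : C₁ = C₂ :=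
  subset_antisymm (circuit_subset_of_subset_insert hI h₁ h₂ hs₁ hs₂)
    (circuit_subset_of_subset_insert hI h₂ h₁ hs₂ hs₁)

end Matroid

/-- Let `Mp = M⁺` (bases `B + e` with `B` a base of `M`, `e ∉ B`; the ground set is not a base).
If `M` contains at least two circuits, and has a base `B` and a circuit `O` with `O \ B` infinite,
then `M⁺` is wild: it has a circuit `C` and a cocircuit `D` with `C ∩ D` infinite. -/
theorem Mplus_wild {α : Type*} (M Mp : Matroid α)
    (hEb : ¬ M.IsBase M.E) (hE : Mp.E = M.E)
    (hB : ∀ X, Mp.IsBase X ↔ ∃ B e, M.IsBase B ∧ e ∈ M.E \ B ∧ X = insert e B)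
    (htwo : ∃ C₁ C₂, M.IsCircuit' C₁ ∧ M.IsCircuit' C₂ ∧ C₁ ≠ C₂)
    (hinf : ∃ B O, M.IsBase B ∧ M.IsCircuit' O ∧ (O \ B).Infinite) :
    ∃ C D, Mp.IsCircuit' C ∧ Mp✶.IsCircuit' D ∧ (C ∩ D).Infinite := by
  classical
  obtain ⟨C₁, C₂, hC₁, hC₂, hC₁₂⟩ := htwo
  obtain ⟨B, O, hBbase, hO, hOB⟩ := hinf
  -- basic facts
  have hOE : O ⊆ M.E := hO.1.subset_ground
  -- a key sufficient condition for independence in Mp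
  have hMpIndep : ∀ I : Set α, I ⊆ M.E → ∀ y, M.Indep (I \ {y}) → Mp.Indep I := by
    intro I hIE y hIy
    obtain ⟨B₁, hB₁, hsub₁⟩ := hIy.exists_isBase_superset
    by_cases hIB : I ⊆ B₁
    · have hne : B₁ ≠ M.E := fun h => hEb (h ▸ hB₁)
      obtain ⟨f, hfE, hfB⟩ := exists_of_ssubset (hB₁.subset_ground.ssubset_of_ne hne)
      exact Matroid.indep_iff.2 ⟨insert f B₁,
        (hB _).2 ⟨B₁, f, hB₁, ⟨hfE, hfB⟩, rfl⟩, hIB.trans (subset_insert _ _)⟩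
    · have hyI : y ∈ I ∧ y ∉ B₁ := by
        obtain ⟨z, hzI, hzB⟩ := not_subset.1 hIB
        have hzy : z = y := by
          by_contra h
          exact hzB (hsub₁ ⟨hzI, h⟩)
        exact hzy ▸ ⟨hzI, hzB⟩
      refine Matroid.indep_iff.2 ⟨insert y B₁,
        (hB _).2 ⟨B₁, y, hB₁, ⟨hIE hyI.1, hyI.2⟩, rfl⟩, fun a ha => ?_⟩
      by_cases h : a = y
      · exact h ▸ mem_insert _ _
      · exact subset_insert _ _ (hsub₁ ⟨ha, h⟩)
  -- pick e ∈ O and a base B' containing O \ {e}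
  obtain ⟨e, he⟩ : O.Nonempty := by
    rw [nonempty_iff_ne_empty]
    rintro rfl
    exact hO.1.not_indep M.empty_indep
  have hOe_ind : M.Indep (O \ {e}) := hO.diff_singleton_indep he
  obtain ⟨B', hB', hOB'⟩ := hOe_ind.exists_isBase_superset
  have heB' : e ∉ B' := by
    intro h
    exact hO.1.not_indep (hB'.indep.subset fun a ha => by
      by_cases hae : a = e
      · exact hae ▸ h
      · exact hOB' ⟨ha, hae⟩)
  have heE : e ∈ M.E := hOE he
  have hBp : Mp.IsBase (insert e B') := (hB _).2 ⟨B', e, hB', ⟨heE, heB'⟩, rfl⟩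
  -- find x outside insert e B'
  obtain ⟨x, hxE, hxBp⟩ : ∃ x, x ∈ M.E ∧ x ∉ insert e B' := by
    have hsub : insert e B' ⊆ M.E := insert_subset heE hB'.subset_ground
    by_contra h
    push_neg at h
    have hEeq : M.E = insert e B' := subset_antisymm h hsub
    exact hC₁₂ (Matroid.circuit_unique_of_subset_insert hB'.indep hC₁ hC₂
      (hC₁.1.subset_ground.trans hEeq.le) (hC₂.1.subset_ground.trans hEeq.le))
  have hdep : Mp.Dep (insert x (insert e B')) :=
    hBp.insert_dep ⟨hE ▸ hxE, hxBp⟩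
  obtain ⟨C, hCsub, hCcirc⟩ := Matroid.exists_isCircuit'_subset hdep
  have hCE : C ⊆ M.E := hE ▸ hCcirc.1.subset_ground
  -- every single-deletion of C is M-dependent
  have hCdel : ∀ y, M.Dep (C \ {y}) := by
    intro y
    refine ⟨fun hind => hCcirc.1.not_indep (hMpIndep C hCE y hind), diff_subset.trans hCE⟩
  -- x ∈ C
  have hxC : x ∈ C := by
    by_contra hxC
    refine (hCdel e).not_indep (hB'.indep.subset fun a ha => ?_)
    rcases hCsub ha.1 with rfl | h
    · exact absurd ha.1 hxC
    · exact h.resolve_left ha.2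
  -- e ∈ C
  have heC : e ∈ C := by
    by_contra heC
    refine (hCdel x).not_indep (hB'.indep.subset fun a ha => ?_)
    rcases hCsub ha.1 with h | h
    · exact absurd h ha.2
    · exact h.resolve_left fun hae => heC (hae ▸ ha.1)
  -- O ⊆ C
  have hOC : O ⊆ C := by
    intro y hyO
    by_contra hyC
    have hye : y ≠ e := fun h => hyC (h ▸ heC)
    have hyB' : y ∈ B' := hOB' ⟨hyO, hye⟩
    have hecl : e ∉ M.closure (B' \ {y}) := by
      intro hecl
      have h1 : y ∈ M.closure (O \ {y}) := hO.mem_closure hyO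
      have h2 : O \ {y} ⊆ insert e (B' \ {y}) := fun b hb => by
        by_cases hbe : b = e
        · exact Or.inl hbe
        · exact Or.inr ⟨hOB' ⟨hb.1, hbe⟩, hb.2⟩
      have h3 := (M.closure_subset_closure h2) h1
      rw [Matroid.closure_insert_eq_of_mem_closure hecl] at h3
      exact hB'.indep.notMem_closure_diff_of_mem hyB' h3
    have hind : M.Indep (insert e (B' \ {y})) := by
      rw [(hB'.indep.subset diff_subset).insert_indep_iff_of_notMem
        (fun h => heB' h.1)]
      exact ⟨heE, hecl⟩
    refine (hCdel x).not_indep (hind.subset fun a ha => ?_)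
    rcases hCsub ha.1 with h | h
    · exact absurd h ha.2
    · rcases h with rfl | h
      · exact mem_insert _ _
      · exact Or.inr ⟨h, fun hay => hyC (hay ▸ ha.1)⟩
  -- the cocircuit M.E \ B
  have hDcoc : Mp✶.IsCircuit' (M.E \ B) := by
    constructor
    · refine ⟨?_, ?_⟩
      · intro h
        rw [Matroid.dual_indep_iff_exists'] at h
        obtain ⟨-, Bp, hBp', hdisj⟩ := h
        obtain ⟨B₂, f, hB₂, hf, rfl⟩ := (hB _).1 hBp'
        have hsubB : insert f B₂ ⊆ B := by
          intro a ha
          have haE : a ∈ M.E := by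
            have := hBp'.subset_ground
            rw [hE] at this
            exact this ha
          by_contra haB
          exact (disjoint_left.1 hdisj ⟨haE, haB⟩) ha
        exact (hB₂.insert_dep hf).not_indep (hBbase.indep.subset hsubB)
      · rw [Matroid.dual_ground, hE]
        exact diff_subset
    · intro D' hD' hsub
      by_contra hne
      obtain ⟨f, hf, hfD'⟩ := exists_of_ssubset (hsub.ssubset_of_ne hne)
      refine hD'.not_indep ?_
      rw [Matroid.dual_indep_iff_exists']
      refine ⟨hD'.subset_ground,
        insert f B, (hB _).2 ⟨B, f, hBbase, hf, rfl⟩, ?_⟩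
      exact disjoint_left.2 fun a ha hmem => by
        rcases hmem with rfl | hmem
        · exact hfD' ha
        · exact (hsub ha).2 hmem
  refine ⟨C, M.E \ B, hCcirc, hDcoc, ?_⟩
  refine hOB.mono fun a ha => ⟨hOC ha.1, hOE ha.1, ha.2⟩
end

section
/- There exists an infinite matroid M together with a circuit C of M and a cocircuit D of M such that C ∩ D is infinite. -/
open Set

namespace WildM

open Classical in
noncomputable def pick (S : Set ℕ) : ℕ := if h : S.Nonempty then h.choose else 0

lemma pick_mem {S : Set ℕ} (h : S.Nonempty) : pick S ∈ S := by
  rw [pick, dif_pos h]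
  exact h.choose_spec

/-- The `j`th branch. -/
def Br (j : ℕ) : Set ℕ := {n | ∃ k, n = Nat.pair j k + 1}

lemma ne_zero_of_mem_Br {n j : ℕ} (h : n ∈ Br j) : n ≠ 0 := by
  obtain ⟨k, rfl⟩ := h; simp

lemma zero_not_mem_Br (j : ℕ) : 0 ∉ Br j := fun h => ne_zero_of_mem_Br h rfl

lemma Br_index_unique {n j j' : ℕ} (h : n ∈ Br j) (h' : n ∈ Br j') : j = j' := by
  obtain ⟨k, rfl⟩ := h; obtain ⟨k', hk'⟩ := h'
  have := Nat.succ_injective hk'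
  exact (Nat.pair_eq_pair.mp this).1

lemma mem_Br_of_ne_zero {n : ℕ} (h : n ≠ 0) : ∃ j, n ∈ Br j := by
  refine ⟨(Nat.unpair (n-1)).1, ⟨(Nat.unpair (n-1)).2, ?_⟩⟩
  rw [Nat.pair_unpair]; omega

/-- The trace of a set on branch `j`. -/
noncomputable def tr (j : ℕ) (R : Set ℕ) : ℕ∞ := (Br j ∩ R).encard

lemma tr_mono {j : ℕ} {R R' : Set ℕ} (h : R ⊆ R') : tr j R ≤ tr j R' :=
  encard_le_encard (inter_subset_inter_right _ h)

lemma tr_eq_zero_iff {j : ℕ} {R : Set ℕ} : tr j R = 0 ↔ ∀ n ∈ Br j, n ∉ R := by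
  rw [tr, encard_eq_zero, eq_empty_iff_forall_notMem]
  constructor
  · intro h n hn hnR; exact h n ⟨hn, hnR⟩
  · rintro h n ⟨hn, hnR⟩; exact h n hn hnR

lemma tr_insert_of_not_mem_Br {j x : ℕ} {R : Set ℕ} (h : x ∉ Br j) :
    tr j (insert x R) = tr j R := by
  unfold tr
  rw [inter_insert_of_notMem h]

lemma tr_insert_Br {j x : ℕ} {R : Set ℕ} (hx : x ∈ Br j) (hxR : x ∉ R) :
    tr j (insert x R) = tr j R + 1 := by
  unfold tr
  rw [inter_insert_of_mem hx]
  exact encard_insert_of_notMem (fun h => hxR h.2)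

lemma tr_diff_of_not_mem_Br {j y : ℕ} {R : Set ℕ} (h : y ∉ Br j) :
    tr j (R \ {y}) = tr j R := by
  unfold tr; congr 1
  ext n; simp only [mem_inter_iff, mem_diff, mem_singleton_iff]
  constructor
  · rintro ⟨hn, hnR, _⟩; exact ⟨hn, hnR⟩
  · rintro ⟨hn, hnR⟩; exact ⟨hn, hnR, fun hne => h (hne ▸ hn)⟩

lemma tr_diff_Br {j y : ℕ} {R : Set ℕ} (hy : y ∈ Br j) (hyR : y ∈ R) :
    tr j (R \ {y}) + 1 = tr j R := by
  unfold tr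
  rw [show Br j ∩ (R \ {y}) = (Br j ∩ R) \ {y} by
    ext n; simp only [mem_inter_iff, mem_diff, mem_singleton_iff]; tauto]
  exact encard_diff_singleton_add_one ⟨hy, hyR⟩

lemma tr_diff_zero {j : ℕ} {R : Set ℕ} : tr j (R \ {0}) = tr j R :=
  tr_diff_of_not_mem_Br (zero_not_mem_Br j)

lemma enat_add_one_inj {a b : ℕ∞} (h : a + 1 = b + 1) : a = b :=
  ENat.add_left_injective_of_ne_top ENat.one_ne_top h

/-- Shapes of complements of bases. -/
def Shape (R : Set ℕ) : Prop :=
  (0 ∈ R ∧ ∃ i, tr i R = 0 ∧ ∀ j, j ≠ i → tr j R = 1) ∨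
  (0 ∉ R ∧ ∃ i j₀, i ≠ j₀ ∧ tr i R = 0 ∧ tr j₀ R = 2 ∧
      ∀ j, j ≠ i → j ≠ j₀ → tr j R = 1) ∨
  (0 ∉ R ∧ ∀ j, tr j R = 1)

lemma Shape.tr_le_two {R : Set ℕ} (h : Shape R) (j : ℕ) : tr j R ≤ 2 := by
  rcases h with ⟨_, i, hi, hj⟩ | ⟨_, i, j₀, hij, hi, hj₀, hj⟩ | ⟨_, hj⟩
  · rcases eq_or_ne j i with rfl | hne
    · simp [hi]
    · rw [hj j hne]; norm_num
  · rcases eq_or_ne j i with rfl | hne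
    · simp [hi]
    · rcases eq_or_ne j j₀ with rfl | hne'
      · simp [hj₀]
      · rw [hj j hne hne']; norm_num
  · rw [hj j]; norm_num

lemma Shape.tr_le_one_of_zero_mem {R : Set ℕ} (h : Shape R) (h0 : 0 ∈ R) (j : ℕ) :
    tr j R ≤ 1 := by
  rcases h with ⟨_, i, hi, hj⟩ | ⟨h0', _⟩ | ⟨h0', _⟩
  · rcases eq_or_ne j i with rfl | hne
    · simp [hi]
    · rw [hj j hne]
  · exact absurd h0 h0'
  · exact absurd h0 h0'

lemma Shape.zero_unique {R : Set ℕ} (h : Shape R) {i i' : ℕ}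
    (hi : tr i R = 0) (hi' : tr i' R = 0) : i = i' := by
  rcases h with ⟨_, i₀, hi₀, hj⟩ | ⟨_, i₀, j₀, hij, hi₀, hj₀, hj⟩ | ⟨_, hj⟩
  · rcases eq_or_ne i i₀ with rfl | hne
    · rcases eq_or_ne i' i with rfl | hne'
      · rfl
      · exact absurd (hj i' hne') (by rw [hi']; norm_num)
    · exact absurd (hj i hne) (by rw [hi]; norm_num)
  · rcases eq_or_ne i i₀ with rfl | hne
    · rcases eq_or_ne i' i with rfl | hne'
      · rfl
      · rcases eq_or_ne i' j₀ with rfl | hne''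
        · exact absurd hj₀ (by rw [hi']; norm_num)
        · exact absurd (hj i' hne' hne'') (by rw [hi']; norm_num)
    · rcases eq_or_ne i j₀ with rfl | hne''
      · exact absurd hj₀ (by rw [hi]; norm_num)
      · exact absurd (hj i hne hne'') (by rw [hi]; norm_num)
  · exact absurd (hj i) (by rw [hi]; norm_num)

lemma Shape.of_two {R : Set ℕ} (h : Shape R) {ℓ : ℕ} (hℓ : tr ℓ R = 2) :
    0 ∉ R ∧ ∃ i, i ≠ ℓ ∧ tr i R = 0 ∧ ∀ j, j ≠ i → j ≠ ℓ → tr j R = 1 := by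
  rcases h with ⟨h0, i, hi, hj⟩ | ⟨h0, i, j₀, hij, hi, hj₀, hj⟩ | ⟨h0, hj⟩
  · rcases eq_or_ne ℓ i with rfl | hne
    · rw [hi] at hℓ; norm_num at hℓ
    · rw [hj ℓ hne] at hℓ; norm_num at hℓ
  · have hℓj₀ : ℓ = j₀ := by
      by_contra hne
      rcases eq_or_ne ℓ i with rfl | hne'
      · rw [hi] at hℓ; norm_num at hℓ
      · rw [hj ℓ hne' hne] at hℓ; norm_num at hℓ
    subst hℓj₀
    exact ⟨h0, i, hij, hi, hj⟩
  · rw [hj ℓ] at hℓ; norm_num at hℓ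



/-- union of chosen singletons, one per branch index in `P`. -/
def cset (P : Set ℕ) (c : ℕ → ℕ) : Set ℕ := ⋃ j ∈ P, {c j}

lemma mem_cset {P : Set ℕ} {c : ℕ → ℕ} {n : ℕ} :
    n ∈ cset P c ↔ ∃ j ∈ P, n = c j := by
  simp [cset]

lemma zero_not_mem_cset {P : Set ℕ} {c : ℕ → ℕ} (hc : ∀ j ∈ P, c j ∈ Br j) :
    0 ∉ cset P c := by
  rw [mem_cset]
  rintro ⟨j, hj, h0⟩
  exact ne_zero_of_mem_Br (hc j hj) h0.symm

lemma inter_cset_of_mem {P : Set ℕ} {c : ℕ → ℕ} (hc : ∀ j ∈ P, c j ∈ Br j)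
    {k : ℕ} (hk : k ∈ P) : Br k ∩ cset P c = {c k} := by
  ext n
  simp only [mem_inter_iff, mem_cset, mem_singleton_iff]
  constructor
  · rintro ⟨hn, j, hj, rfl⟩
    rw [Br_index_unique hn (hc j hj)]
  · rintro rfl
    exact ⟨hc k hk, k, hk, rfl⟩

lemma tr_cset_of_mem {P : Set ℕ} {c : ℕ → ℕ} (hc : ∀ j ∈ P, c j ∈ Br j)
    {k : ℕ} (hk : k ∈ P) : tr k (cset P c) = 1 := by
  rw [tr, inter_cset_of_mem hc hk, encard_singleton]

lemma tr_cset_of_not_mem {P : Set ℕ} {c : ℕ → ℕ} (hc : ∀ j ∈ P, c j ∈ Br j)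
    {k : ℕ} (hk : k ∉ P) : tr k (cset P c) = 0 := by
  rw [tr, encard_eq_zero, eq_empty_iff_forall_notMem]
  rintro n ⟨hn, hcs⟩
  rw [mem_cset] at hcs
  obtain ⟨j, hj, rfl⟩ := hcs
  exact hk ((Br_index_unique (hc j hj) hn) ▸ hj)

lemma tr_union_zero {j : ℕ} {S : Set ℕ} : tr j ({0} ∪ S) = tr j S := by
  rw [tr, tr, inter_union_distrib_left,
    show Br j ∩ {0} = ∅ by
      rw [eq_empty_iff_forall_notMem]; rintro n ⟨hn, rfl⟩; exact zero_not_mem_Br j hn,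
    empty_union]

/-- Bases: complements have one of the three shapes. -/
def BaseP (B : Set ℕ) : Prop := Shape Bᶜ

def IndepP (I : Set ℕ) : Prop := ∃ B, BaseP B ∧ I ⊆ B

lemma IndepP.mono {I J : Set ℕ} (h : IndepP J) (hIJ : I ⊆ J) : IndepP I := by
  obtain ⟨B, hB, hJB⟩ := h
  exact ⟨B, hB, hIJ.trans hJB⟩

/-- number of elements of branch `j` missing from `A`. -/
noncomputable def mis (j : ℕ) (A : Set ℕ) : ℕ∞ := (Br j \ A).encard

lemma mis_eq_tr {j : ℕ} {A : Set ℕ} : mis j A = tr j Aᶜ := by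
  rw [mis, tr, diff_eq]

lemma mis_mono {j : ℕ} {A A' : Set ℕ} (h : A ⊆ A') : mis j A' ≤ mis j A :=
  encard_le_encard (diff_subset_diff_right h)

lemma mis_eq_zero_iff {j : ℕ} {A : Set ℕ} : mis j A = 0 ↔ Br j ⊆ A := by
  rw [mis, encard_eq_zero, diff_eq_empty]

lemma mis_nonempty {j : ℕ} {A : Set ℕ} (h : mis j A ≠ 0) : (Br j \ A).Nonempty :=
  nonempty_of_encard_ne_zero h

lemma indep_T1 {I : Set ℕ} (h0 : 0 ∉ I) (i : ℕ)
    (hne : ∀ j, j ≠ i → mis j I ≠ 0) : IndepP I := by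
  set c : ℕ → ℕ := fun j => pick (Br j \ I) with hc_def
  have hc : ∀ j ∈ {j | j ≠ i}, c j ∈ Br j :=
    fun j hj => (pick_mem (mis_nonempty (hne j hj))).1
  have hcI : ∀ j, j ≠ i → c j ∉ I :=
    fun j hj => (pick_mem (mis_nonempty (hne j hj))).2
  refine ⟨({0} ∪ cset {j | j ≠ i} c)ᶜ, ?_, ?_⟩
  · rw [BaseP, compl_compl]
    left
    refine ⟨Or.inl rfl, i, ?_, ?_⟩
    · rw [tr_union_zero, tr_cset_of_not_mem hc (by simp)]
    · intro j hj
      rw [tr_union_zero, tr_cset_of_mem hc hj]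
  · intro n hn
    simp only [mem_compl_iff, mem_union, mem_singleton_iff, mem_cset]
    rintro (rfl | ⟨j, hj, rfl⟩)
    · exact h0 hn
    · exact hcI j hj hn

lemma indep_T2b {I : Set ℕ} (hne : ∀ j, mis j I ≠ 0) : IndepP I := by
  set c : ℕ → ℕ := fun j => pick (Br j \ I) with hc_def
  have hc : ∀ j ∈ (univ : Set ℕ), c j ∈ Br j :=
    fun j _ => (pick_mem (mis_nonempty (hne j))).1
  have hcI : ∀ j, c j ∉ I :=
    fun j => (pick_mem (mis_nonempty (hne j))).2
  refine ⟨(cset univ c)ᶜ, ?_, ?_⟩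
  · rw [BaseP, compl_compl]
    right; right
    exact ⟨zero_not_mem_cset hc, fun j => tr_cset_of_mem hc (mem_univ j)⟩
  · intro n hn
    simp only [mem_compl_iff, mem_cset]
    rintro ⟨j, -, rfl⟩
    exact hcI j hn

lemma indep_T2a {I : Set ℕ} (i j₀ : ℕ) (hij : i ≠ j₀) (h2 : 2 ≤ mis j₀ I)
    (hne : ∀ j, j ≠ i → j ≠ j₀ → mis j I ≠ 0) : IndepP I := by
  obtain ⟨t, hts, ht2⟩ := exists_subset_encard_eq h2
  obtain ⟨d₁, d₂, hd12, rfl⟩ := encard_eq_two.mp ht2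
  have hd₁ : d₁ ∈ Br j₀ \ I := hts (by simp)
  have hd₂ : d₂ ∈ Br j₀ \ I := hts (by simp)
  set c : ℕ → ℕ := fun j => pick (Br j \ I) with hc_def
  have hc : ∀ j ∈ {j | j ≠ i ∧ j ≠ j₀}, c j ∈ Br j :=
    fun j hj => (pick_mem (mis_nonempty (hne j hj.1 hj.2))).1
  have hcI : ∀ j, j ≠ i → j ≠ j₀ → c j ∉ I :=
    fun j hj hj' => (pick_mem (mis_nonempty (hne j hj hj'))).2
  have hpair : ∀ k, k ≠ j₀ → Br k ∩ {d₁, d₂} = ∅ := by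
    intro k hk
    rw [eq_empty_iff_forall_notMem]
    rintro n ⟨hn, (rfl | rfl)⟩
    · exact hk (Br_index_unique hn hd₁.1)
    · exact hk (Br_index_unique hn hd₂.1)
  have hiP : i ∉ {j | j ≠ i ∧ j ≠ j₀} := by simp
  have hj₀P : j₀ ∉ {j | j ≠ i ∧ j ≠ j₀} := by simp
  have hcsi : Br i ∩ cset {j | j ≠ i ∧ j ≠ j₀} c = ∅ := by
    have := tr_cset_of_not_mem hc hiP
    rwa [tr, encard_eq_zero] at this
  have hcsj₀ : Br j₀ ∩ cset {j | j ≠ i ∧ j ≠ j₀} c = ∅ := by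
    have := tr_cset_of_not_mem hc hj₀P
    rwa [tr, encard_eq_zero] at this
  refine ⟨(({d₁, d₂} : Set ℕ) ∪ cset {j | j ≠ i ∧ j ≠ j₀} c)ᶜ, ?_, ?_⟩
  · rw [BaseP, compl_compl]
    right; left
    refine ⟨?_, i, j₀, hij, ?_, ?_, ?_⟩
    · rintro (h | h)
      · rcases h with h | h
        · exact ne_zero_of_mem_Br hd₁.1 h.symm
        · exact ne_zero_of_mem_Br hd₂.1 (mem_singleton_iff.mp h).symm
      · exact zero_not_mem_cset hc h
    · rw [tr, inter_union_distrib_left, hpair i hij, empty_union, ← tr,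
        tr_cset_of_not_mem hc hiP]
    · have hsub : ({d₁, d₂} : Set ℕ) ⊆ Br j₀ := by
        rintro n (h | h)
        · exact h ▸ hd₁.1
        · exact (mem_singleton_iff.mp h) ▸ hd₂.1
      rw [tr, inter_union_distrib_left, inter_eq_self_of_subset_right hsub,
        hcsj₀, union_empty]
      exact encard_pair hd12
    · intro j hji hjj₀
      rw [tr, inter_union_distrib_left, hpair j hjj₀, empty_union, ← tr,
        tr_cset_of_mem hc ⟨hji, hjj₀⟩]
  · intro n hn
    simp only [mem_compl_iff, mem_union, mem_insert_iff, mem_singleton_iff, mem_cset]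
    push_neg
    refine ⟨⟨fun h => hd₁.2 (h ▸ hn), fun h => hd₂.2 (h ▸ hn)⟩, ?_⟩
    rintro j ⟨hji, hjj₀⟩ h
    exact hcI j hji hjj₀ (h ▸ hn)

lemma indep_iff {I : Set ℕ} : IndepP I ↔
    (∀ ⦃i i'⦄, mis i I = 0 → mis i' I = 0 → i = i') ∧
    (0 ∈ I → ∀ i, mis i I = 0 → ∃ j, j ≠ i ∧ 2 ≤ mis j I) := by
  constructor
  · rintro ⟨B, hB, hIB⟩
    have hmono : ∀ j, mis j B ≤ mis j I := fun j => mis_mono hIB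
    have hzB : ∀ i, mis i I = 0 → tr i Bᶜ = 0 := by
      intro i hi
      rw [← mis_eq_tr]
      exact le_antisymm (le_trans (hmono i) (le_of_eq hi)) (by simp)
    have hsh : Shape Bᶜ := hB
    constructor
    · intro i i' hi hi'
      exact hsh.zero_unique (hzB i hi) (hzB i' hi')
    · intro h0 i hi
      have h0B : 0 ∉ Bᶜ := fun h => h (hIB h0)
      rcases hB with ⟨h0', _⟩ | ⟨_, i₀, j₀, hij, hi₀, hj₀, _⟩ | ⟨_, hall⟩
      · exact absurd h0' h0B
      · have hii₀ : i = i₀ := hsh.zero_unique (hzB i hi) hi₀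
        refine ⟨j₀, by rw [hii₀]; exact fun h => hij h.symm, ?_⟩
        calc (2:ℕ∞) = tr j₀ Bᶜ := hj₀.symm
          _ = mis j₀ B := mis_eq_tr.symm
          _ ≤ mis j₀ I := hmono j₀
      · exact absurd (hzB i hi) (by rw [hall i]; norm_num)
  · rintro ⟨hz, h02⟩
    by_cases h0 : 0 ∈ I
    · by_cases hex : ∃ i, mis i I = 0
      · obtain ⟨i, hi⟩ := hex
        obtain ⟨j₀, hj₀i, h2⟩ := h02 h0 i hi
        refine indep_T2a i j₀ (fun h => hj₀i h.symm) h2 ?_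
        intro j hji hjj₀ hj0
        exact hji (hz hj0 hi)
      · push_neg at hex
        exact indep_T2b hex
    · by_cases hex : ∃ i, mis i I = 0
      · obtain ⟨i, hi⟩ := hex
        exact indep_T1 h0 i (fun j hj hj0 => hj (hz hj0 hi))
      · push_neg at hex
        exact indep_T1 h0 0 (fun j _ => hex j)

lemma enat1 {a : ℕ∞} (h : a + 1 = 1) : a = 0 :=
  enat_add_one_inj (by rw [h, zero_add])

lemma enat2 {a : ℕ∞} (h : a + 1 = 2) : a = 1 :=
  enat_add_one_inj (by rw [h]; rfl)

lemma enat3 {a : ℕ∞} (h : a + 1 = 3) : a = 2 :=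
  enat_add_one_inj (by rw [h]; rfl)

lemma not_mem_Br_of_mem {y ℓ j : ℕ} (hy : y ∈ Br ℓ) (hne : j ≠ ℓ) : y ∉ Br j :=
  fun h => hne (Br_index_unique h hy)

lemma tr_swap_generic {j x y : ℕ} {R : Set ℕ} (hx : x ∉ Br j) (hy : y ∉ Br j) :
    tr j ((insert x R) \ {y}) = tr j R := by
  rw [tr_diff_of_not_mem_Br hy, tr_insert_of_not_mem_Br hx]

lemma singleton_of_tr_one {ℓ : ℕ} {R : Set ℕ} (h : tr ℓ R = 1) :
    ∃ w, w ∈ Br ℓ ∧ w ∈ R ∧ Br ℓ ∩ R = {w} := by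
  obtain ⟨w, hw⟩ := encard_eq_one.mp h
  have : w ∈ Br ℓ ∩ R := by rw [hw]; exact mem_singleton w
  exact ⟨w, this.1, this.2, hw⟩

lemma pair_of_tr_two {ℓ : ℕ} {R : Set ℕ} (h : tr ℓ R = 2) :
    ∃ a b, a ≠ b ∧ a ∈ Br ℓ ∧ a ∈ R ∧ b ∈ Br ℓ ∧ b ∈ R ∧ Br ℓ ∩ R = {a, b} := by
  obtain ⟨a, b, hab, hset⟩ := encard_eq_two.mp h
  have ha : a ∈ Br ℓ ∩ R := by rw [hset]; exact Or.inl rfl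
  have hb : b ∈ Br ℓ ∩ R := by rw [hset]; exact Or.inr rfl
  exact ⟨a, b, hab, ha.1, ha.2, hb.1, hb.2, hset⟩

lemma two_le_tr {ℓ a b : ℕ} {R : Set ℕ} (hab : a ≠ b) (ha : a ∈ Br ℓ ∩ R)
    (hb : b ∈ Br ℓ ∩ R) : 2 ≤ tr ℓ R := by
  have : ({a, b} : Set ℕ) ⊆ Br ℓ ∩ R := by rintro n (rfl | h); exact ha; exact (mem_singleton_iff.mp h) ▸ hb
  calc (2:ℕ∞) = ({a, b} : Set ℕ).encard := (encard_pair hab).symm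
    _ ≤ _ := encard_le_encard this

lemma three_le_tr {ℓ x a b : ℕ} {R : Set ℕ} (hxa : x ≠ a) (hxb : x ≠ b) (hab : a ≠ b)
    (hx : x ∈ Br ℓ ∩ R) (ha : a ∈ Br ℓ ∩ R) (hb : b ∈ Br ℓ ∩ R) : 3 ≤ tr ℓ R := by
  have hsub : ({x, a, b} : Set ℕ) ⊆ Br ℓ ∩ R := by
    rintro n (rfl | rfl | h)
    · exact hx
    · exact ha
    · exact (mem_singleton_iff.mp h) ▸ hb
  have hxnot : x ∉ ({a, b} : Set ℕ) := by
    rintro (h | h)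
    · exact hxa h
    · exact hxb (mem_singleton_iff.mp h)
  have henc : ({x, a, b} : Set ℕ).encard = 3 := by
    rw [encard_insert_of_notMem hxnot, encard_pair hab]
    rfl
  exact henc ▸ encard_le_encard hsub

/-- The exchange property, in complement language. -/
lemma exchangeR {R₁ R₂ : Set ℕ} (h1 : Shape R₁) (h2 : Shape R₂) {x : ℕ}
    (hx2 : x ∈ R₂) (hx1 : x ∉ R₁) :
    ∃ y, y ∈ R₁ ∧ y ∉ R₂ ∧ Shape ((insert x R₁) \ {y}) := by
  rcases eq_or_ne x 0 with rfl | hx0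
  -- ======================== Case x = 0 ========================
  · have h0₂ : (0:ℕ) ∈ R₂ := hx2
    obtain ⟨-, i₂, hi₂, hj₂⟩ : 0 ∈ R₂ ∧ ∃ i, tr i R₂ = 0 ∧ ∀ j, j ≠ i → tr j R₂ = 1 := by
      rcases h2 with h | ⟨h0, -⟩ | ⟨h0, -⟩
      · exact h
      · exact absurd h0₂ h0
      · exact absurd h0₂ h0
    have hR₂le : ∀ j, tr j R₂ ≤ 1 := h2.tr_le_one_of_zero_mem h0₂
    rcases h1 with ⟨h0₁, -⟩ | ⟨h0₁, i₁, j₀, hij, hi₁, hj₀, hoth⟩ | ⟨h0₁, hall⟩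
    · exact absurd h0₁ hx1
    -- R₁ of shape S2a
    · obtain ⟨a, b, hab, haB, haR, hbB, hbR, hset⟩ := pair_of_tr_two hj₀
      have hy : ∃ y, y ∈ Br j₀ ∧ y ∈ R₁ ∧ y ∉ R₂ := by
        by_cases ha2 : a ∈ R₂
        · by_cases hb2 : b ∈ R₂
          · exact absurd ((two_le_tr hab ⟨haB, ha2⟩ ⟨hbB, hb2⟩).trans (hR₂le j₀))
              (by norm_num)
          · exact ⟨b, hbB, hbR, hb2⟩
        · exact ⟨a, haB, haR, ha2⟩
      obtain ⟨y, hyB, hyR, hyR₂⟩ := hy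
      refine ⟨y, hyR, hyR₂, Or.inl ⟨?_, i₁, ?_, ?_⟩⟩
      · exact ⟨Or.inl rfl, fun h => ne_zero_of_mem_Br hyB (mem_singleton_iff.mp h).symm⟩
      · rw [tr_swap_generic (zero_not_mem_Br i₁) (not_mem_Br_of_mem hyB (fun h => hij h))]
        exact hi₁
      · intro j hj
        rcases eq_or_ne j j₀ with rfl | hjj₀
        · refine enat2 ?_
          rw [tr_diff_Br hyB (Or.inr hyR), tr_insert_of_not_mem_Br (zero_not_mem_Br j)]
          exact hj₀
        · rw [tr_swap_generic (zero_not_mem_Br j) (not_mem_Br_of_mem hyB hjj₀)]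
          exact hoth j hj hjj₀
    -- R₁ of shape S2b
    · obtain ⟨y, hyB, hyR, -⟩ := singleton_of_tr_one (hall i₂)
      have hyR₂ : y ∉ R₂ := by
        have := tr_eq_zero_iff.mp hi₂
        exact this y hyB
      refine ⟨y, hyR, hyR₂, Or.inl ⟨?_, i₂, ?_, ?_⟩⟩
      · exact ⟨Or.inl rfl, fun h => ne_zero_of_mem_Br hyB (mem_singleton_iff.mp h).symm⟩
      · refine enat1 ?_
        rw [tr_diff_Br hyB (Or.inr hyR), tr_insert_of_not_mem_Br (zero_not_mem_Br i₂)]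
        exact hall i₂
      · intro j hj
        rw [tr_swap_generic (zero_not_mem_Br j) (not_mem_Br_of_mem hyB hj)]
        exact hall j
  -- ======================== Case x ∈ Br k ========================
  · obtain ⟨k, hxk⟩ := mem_Br_of_ne_zero hx0
    rcases h1 with ⟨h0₁, i₁, hi₁, hj₁⟩ | ⟨h0₁, i₁, j₀, hij, hi₁, hj₀, hoth⟩ | ⟨h0₁, hall⟩
    -- ---------------- R₁ of shape S1 ----------------
    · by_cases hk : k = i₁
      · subst hk
        by_cases h0₂ : 0 ∈ R₂
        · obtain ⟨-, i₂, hi₂, hj₂⟩ :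
              0 ∈ R₂ ∧ ∃ i, tr i R₂ = 0 ∧ ∀ j, j ≠ i → tr j R₂ = 1 := by
            rcases h2 with h | ⟨h0, -⟩ | ⟨h0, -⟩
            · exact h
            · exact absurd h0₂ h0
            · exact absurd h0₂ h0
          have hii : i₂ ≠ k := fun h => (tr_eq_zero_iff.mp hi₂) x (by rw [h]; exact hxk) hx2
          obtain ⟨y, hyB, hyR, -⟩ := singleton_of_tr_one (hj₁ i₂ hii)
          have hyR₂ : y ∉ R₂ := tr_eq_zero_iff.mp hi₂ y hyB
          refine ⟨y, hyR, hyR₂, Or.inl ⟨?_, i₂, ?_, ?_⟩⟩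
          · exact ⟨Or.inr h0₁, fun h => ne_zero_of_mem_Br hyB (mem_singleton_iff.mp h).symm⟩
          · refine enat1 ?_
            rw [tr_diff_Br hyB (Or.inr hyR),
              tr_insert_of_not_mem_Br (not_mem_Br_of_mem hxk hii)]
            exact hj₁ i₂ hii
          · intro j hj
            rcases eq_or_ne j k with rfl | hjk
            · rw [tr_diff_of_not_mem_Br (not_mem_Br_of_mem hyB hj), tr_insert_Br hxk hx1,
                hi₁, zero_add]
            · rw [tr_swap_generic (not_mem_Br_of_mem hxk hjk) (not_mem_Br_of_mem hyB hj)]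
              exact hj₁ j hjk
        · refine ⟨0, h0₁, h0₂, Or.inr (Or.inr ⟨fun h => h.2 rfl, fun j => ?_⟩)⟩
          rcases eq_or_ne j k with rfl | hjk
          · rw [tr_diff_zero, tr_insert_Br hxk hx1, hi₁, zero_add]
          · rw [tr_diff_zero, tr_insert_of_not_mem_Br (not_mem_Br_of_mem hxk hjk)]
            exact hj₁ j hjk
      · obtain ⟨w, hwB, hwR, -⟩ := singleton_of_tr_one (hj₁ k hk)
        have hxw : x ≠ w := fun h => hx1 (h ▸ hwR)
        by_cases hw2 : w ∈ R₂
        · by_cases h0₂ : 0 ∈ R₂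
          · exact absurd ((two_le_tr hxw ⟨hxk, hx2⟩ ⟨hwB, hw2⟩).trans
              (h2.tr_le_one_of_zero_mem h0₂ k)) (by norm_num)
          · refine ⟨0, h0₁, h0₂, Or.inr (Or.inl ⟨fun h => h.2 rfl, i₁, k, Ne.symm hk, ?_, ?_, ?_⟩)⟩
            · rw [tr_diff_zero, tr_insert_of_not_mem_Br (not_mem_Br_of_mem hxk (Ne.symm hk))]
              exact hi₁
            · rw [tr_diff_zero, tr_insert_Br hxk hx1, hj₁ k hk]
              norm_num
            · intro j hji hjk
              rw [tr_diff_zero, tr_insert_of_not_mem_Br (not_mem_Br_of_mem hxk hjk)]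
              exact hj₁ j hji
        · refine ⟨w, hwR, hw2, Or.inl ⟨?_, i₁, ?_, ?_⟩⟩
          · exact ⟨Or.inr h0₁, fun h => ne_zero_of_mem_Br hwB (mem_singleton_iff.mp h).symm⟩
          · rw [tr_swap_generic (not_mem_Br_of_mem hxk (Ne.symm hk))
              (not_mem_Br_of_mem hwB (Ne.symm hk))]
            exact hi₁
          · intro j hj
            rcases eq_or_ne j k with rfl | hjk
            · refine enat2 ?_
              rw [tr_diff_Br hwB (Or.inr hwR), tr_insert_Br hxk hx1, hj₁ j hj]
              norm_num
            · rw [tr_swap_generic (not_mem_Br_of_mem hxk hjk) (not_mem_Br_of_mem hwB hjk)]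
              exact hj₁ j hj
    -- ---------------- R₁ of shape S2a ----------------
    · obtain ⟨a, b, hab, haB, haR, hbB, hbR, hset⟩ := pair_of_tr_two hj₀
      have hxa : x ≠ a := fun h => hx1 (h ▸ haR)
      have hxb : x ≠ b := fun h => hx1 (h ▸ hbR)
      have h0ins : (0:ℕ) ∉ insert x R₁ := by
        rintro (h | h)
        · exact hx0 h.symm
        · exact h0₁ h
      by_cases hkj₀ : k = j₀
      · subst hkj₀
        have hy : ∃ y, y ∈ Br k ∧ y ∈ R₁ ∧ y ∉ R₂ := by
          by_cases ha2 : a ∈ R₂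
          · by_cases hb2 : b ∈ R₂
            · exact absurd ((three_le_tr hxa hxb hab ⟨hxk, hx2⟩ ⟨haB, ha2⟩
                ⟨hbB, hb2⟩).trans (h2.tr_le_two k)) (by norm_num)
            · exact ⟨b, hbB, hbR, hb2⟩
          · exact ⟨a, haB, haR, ha2⟩
        obtain ⟨y, hyB, hyR, hyR₂⟩ := hy
        refine ⟨y, hyR, hyR₂, Or.inr (Or.inl ⟨fun h => h0ins h.1, i₁, k, hij, ?_, ?_, ?_⟩)⟩
        · rw [tr_swap_generic (not_mem_Br_of_mem hxk hij) (not_mem_Br_of_mem hyB hij)]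
          exact hi₁
        · refine enat3 ?_
          rw [tr_diff_Br hyB (Or.inr hyR), tr_insert_Br hxk hx1, hj₀]
          norm_num
        · intro j hji hjk
          rw [tr_swap_generic (not_mem_Br_of_mem hxk hjk) (not_mem_Br_of_mem hyB hjk)]
          exact hoth j hji hjk
      · by_cases hki₁ : k = i₁
        · subst hki₁
          by_cases ha2 : a ∈ R₂
          · by_cases hb2 : b ∈ R₂
            · have h2j₀ : tr j₀ R₂ = 2 :=
                le_antisymm (h2.tr_le_two j₀) (two_le_tr hab ⟨haB, ha2⟩ ⟨hbB, hb2⟩)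
              obtain ⟨h0₂, i₂, hi₂j₀, hi₂, hoth₂⟩ := h2.of_two h2j₀
              have hi₂k : i₂ ≠ k := fun h => (tr_eq_zero_iff.mp hi₂) x (by rw [h]; exact hxk) hx2
              obtain ⟨y, hyB, hyR, -⟩ := singleton_of_tr_one (hoth i₂ hi₂k hi₂j₀)
              have hyR₂ : y ∉ R₂ := tr_eq_zero_iff.mp hi₂ y hyB
              refine ⟨y, hyR, hyR₂,
                Or.inr (Or.inl ⟨fun h => h0ins h.1, i₂, j₀, hi₂j₀, ?_, ?_, ?_⟩)⟩
              · refine enat1 ?_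
                rw [tr_diff_Br hyB (Or.inr hyR),
                  tr_insert_of_not_mem_Br (not_mem_Br_of_mem hxk hi₂k)]
                exact hoth i₂ hi₂k hi₂j₀
              · rw [tr_swap_generic (not_mem_Br_of_mem hxk (Ne.symm hkj₀))
                  (not_mem_Br_of_mem hyB (Ne.symm hi₂j₀))]
                exact hj₀
              · intro j hji₂ hjj₀
                rcases eq_or_ne j k with rfl | hjk
                · rw [tr_diff_of_not_mem_Br (not_mem_Br_of_mem hyB hji₂),
                    tr_insert_Br hxk hx1, hi₁, zero_add]
                · rw [tr_swap_generic (not_mem_Br_of_mem hxk hjk) (not_mem_Br_of_mem hyB hji₂)]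
                  exact hoth j hjk hjj₀
            · refine ⟨b, hbR, hb2, Or.inr (Or.inr ⟨fun h => h0ins h.1, fun j => ?_⟩)⟩
              rcases eq_or_ne j k with rfl | hjk
              · rw [tr_diff_of_not_mem_Br (not_mem_Br_of_mem hbB hij),
                  tr_insert_Br hxk hx1, hi₁, zero_add]
              · rcases eq_or_ne j j₀ with rfl | hjj₀
                · refine enat2 ?_
                  rw [tr_diff_Br hbB (Or.inr hbR),
                    tr_insert_of_not_mem_Br (not_mem_Br_of_mem hxk (Ne.symm hkj₀))]
                  exact hj₀
                · rw [tr_swap_generic (not_mem_Br_of_mem hxk hjk)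
                    (not_mem_Br_of_mem hbB hjj₀)]
                  exact hoth j hjk hjj₀
          · refine ⟨a, haR, ha2, Or.inr (Or.inr ⟨fun h => h0ins h.1, fun j => ?_⟩)⟩
            rcases eq_or_ne j k with rfl | hjk
            · rw [tr_diff_of_not_mem_Br (not_mem_Br_of_mem haB hij),
                tr_insert_Br hxk hx1, hi₁, zero_add]
            · rcases eq_or_ne j j₀ with rfl | hjj₀
              · refine enat2 ?_
                rw [tr_diff_Br haB (Or.inr haR), tr_insert_of_not_mem_Br ?xa]
                · exact hj₀
                · exact not_mem_Br_of_mem hxk (Ne.symm hkj₀)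
              · rw [tr_swap_generic (not_mem_Br_of_mem hxk hjk)
                  (not_mem_Br_of_mem haB hjj₀)]
                exact hoth j hjk hjj₀
        · obtain ⟨w, hwB, hwR, -⟩ := singleton_of_tr_one (hoth k hki₁ hkj₀)
          have hxw : x ≠ w := fun h => hx1 (h ▸ hwR)
          by_cases ha2 : a ∈ R₂
          · by_cases hb2 : b ∈ R₂
            · by_cases hw2 : w ∈ R₂
              · have h2j₀ : tr j₀ R₂ = 2 :=
                  le_antisymm (h2.tr_le_two j₀) (two_le_tr hab ⟨haB, ha2⟩ ⟨hbB, hb2⟩)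
                obtain ⟨h0₂, i₂, hi₂j₀, hi₂, hoth₂⟩ := h2.of_two h2j₀
                have h2k : 2 ≤ tr k R₂ := two_le_tr hxw ⟨hxk, hx2⟩ ⟨hwB, hw2⟩
                rcases eq_or_ne k i₂ with rfl | hki₂
                · rw [hi₂] at h2k; norm_num at h2k
                · rw [hoth₂ k hki₂ hkj₀] at h2k; norm_num at h2k
              · refine ⟨w, hwR, hw2,
                  Or.inr (Or.inl ⟨fun h => h0ins h.1, i₁, j₀, hij, ?_, ?_, ?_⟩)⟩
                · rw [tr_swap_generic (not_mem_Br_of_mem hxk (Ne.symm hki₁))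
                    (not_mem_Br_of_mem hwB (Ne.symm hki₁))]
                  exact hi₁
                · rw [tr_swap_generic (not_mem_Br_of_mem hxk (Ne.symm hkj₀))
                    (not_mem_Br_of_mem hwB (Ne.symm hkj₀))]
                  exact hj₀
                · intro j hji hjj₀
                  rcases eq_or_ne j k with rfl | hjk
                  · refine enat2 ?_
                    rw [tr_diff_Br hwB (Or.inr hwR), tr_insert_Br hxk hx1,
                      hoth j hji hjj₀]
                    norm_num
                  · rw [tr_swap_generic (not_mem_Br_of_mem hxk hjk)
                      (not_mem_Br_of_mem hwB hjk)]
                    exact hoth j hji hjj₀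
            · refine ⟨b, hbR, hb2,
                Or.inr (Or.inl ⟨fun h => h0ins h.1, i₁, k, Ne.symm hki₁, ?_, ?_, ?_⟩)⟩
              · rw [tr_swap_generic (not_mem_Br_of_mem hxk (Ne.symm hki₁))
                  (not_mem_Br_of_mem hbB hij)]
                exact hi₁
              · rw [tr_diff_of_not_mem_Br (not_mem_Br_of_mem hbB hkj₀),
                  tr_insert_Br hxk hx1, hoth k hki₁ hkj₀]
                norm_num
              · intro j hji hjk
                rcases eq_or_ne j j₀ with rfl | hjj₀
                · refine enat2 ?_
                  rw [tr_diff_Br hbB (Or.inr hbR),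
                    tr_insert_of_not_mem_Br (not_mem_Br_of_mem hxk (Ne.symm hkj₀))]
                  exact hj₀
                · rw [tr_swap_generic (not_mem_Br_of_mem hxk hjk)
                    (not_mem_Br_of_mem hbB hjj₀)]
                  exact hoth j hji hjj₀
          · refine ⟨a, haR, ha2,
              Or.inr (Or.inl ⟨fun h => h0ins h.1, i₁, k, Ne.symm hki₁, ?_, ?_, ?_⟩)⟩
            · rw [tr_swap_generic (not_mem_Br_of_mem hxk (Ne.symm hki₁))
                (not_mem_Br_of_mem haB hij)]
              exact hi₁
            · rw [tr_diff_of_not_mem_Br (not_mem_Br_of_mem haB hkj₀),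
                tr_insert_Br hxk hx1, hoth k hki₁ hkj₀]
              norm_num
            · intro j hji hjk
              rcases eq_or_ne j j₀ with rfl | hjj₀
              · refine enat2 ?_
                rw [tr_diff_Br haB (Or.inr haR),
                  tr_insert_of_not_mem_Br (not_mem_Br_of_mem hxk (Ne.symm hkj₀))]
                exact hj₀
              · rw [tr_swap_generic (not_mem_Br_of_mem hxk hjk)
                  (not_mem_Br_of_mem haB hjj₀)]
                exact hoth j hji hjj₀
    -- ---------------- R₁ of shape S2b ----------------
    · obtain ⟨w, hwB, hwR, -⟩ := singleton_of_tr_one (hall k)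
      have hxw : x ≠ w := fun h => hx1 (h ▸ hwR)
      have h0ins : (0:ℕ) ∉ insert x R₁ := by
        rintro (h | h)
        · exact hx0 h.symm
        · exact h0₁ h
      by_cases hw2 : w ∈ R₂
      · have h2k : tr k R₂ = 2 :=
          le_antisymm (h2.tr_le_two k) (two_le_tr hxw ⟨hxk, hx2⟩ ⟨hwB, hw2⟩)
        obtain ⟨h0₂, i₂, hi₂k, hi₂, hoth₂⟩ := h2.of_two h2k
        obtain ⟨y, hyB, hyR, -⟩ := singleton_of_tr_one (hall i₂)
        have hyR₂ : y ∉ R₂ := tr_eq_zero_iff.mp hi₂ y hyB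
        refine ⟨y, hyR, hyR₂,
          Or.inr (Or.inl ⟨fun h => h0ins h.1, i₂, k, hi₂k, ?_, ?_, ?_⟩)⟩
        · refine enat1 ?_
          rw [tr_diff_Br hyB (Or.inr hyR),
            tr_insert_of_not_mem_Br (not_mem_Br_of_mem hxk hi₂k)]
          exact hall i₂
        · rw [tr_diff_of_not_mem_Br (not_mem_Br_of_mem hyB (Ne.symm hi₂k)),
            tr_insert_Br hxk hx1, hall k]
          norm_num
        · intro j hji₂ hjk
          rw [tr_swap_generic (not_mem_Br_of_mem hxk hjk) (not_mem_Br_of_mem hyB hji₂)]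
          exact hall j
      · refine ⟨w, hwR, hw2, Or.inr (Or.inr ⟨fun h => h0ins h.1, fun j => ?_⟩)⟩
        rcases eq_or_ne j k with rfl | hjk
        · refine enat2 ?_
          rw [tr_diff_Br hwB (Or.inr hwR), tr_insert_Br hxk hx1, hall j]
          norm_num
        · rw [tr_swap_generic (not_mem_Br_of_mem hxk hjk) (not_mem_Br_of_mem hwB hjk)]
          exact hall j

lemma brdiff {j : ℕ} {X W : Set ℕ} (_hW : W ⊆ X) :
    Br j \ (X \ W) = (Br j \ X) ∪ (Br j ∩ W) := by
  ext n
  simp only [mem_diff, mem_union, mem_inter_iff]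
  constructor
  · rintro ⟨hn, h⟩
    by_cases hX : n ∈ X
    · exact Or.inr ⟨hn, by_contra fun hw => h ⟨hX, hw⟩⟩
    · exact Or.inl ⟨hn, hX⟩
  · rintro (⟨hn, hX⟩ | ⟨hn, hw⟩)
    · exact ⟨hn, fun h => hX h.1⟩
    · exact ⟨hn, fun h => h.2 hw⟩

lemma maximal_of {X J : Set ℕ} (hJind : IndepP J) (hJX : J ⊆ X)
    (hblock : ∀ x ∈ X, x ∉ J → ¬ IndepP (insert x J)) :
    Maximal (fun K => IndepP K ∧ K ⊆ X) J := by
  refine ⟨⟨hJind, hJX⟩, ?_⟩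
  intro K hK hJK n hnK
  by_contra hnJ
  exact hblock n (hK.2 hnK) hnJ (hK.1.mono (insert_subset hnK hJK))

lemma diff_insert_eq {s t : Set ℕ} {a : ℕ} : s \ insert a t = (s \ t) \ {a} := by
  ext n
  simp only [mem_diff, mem_insert_iff, mem_singleton_iff]
  tauto

lemma mis_insert_le {j x : ℕ} {A : Set ℕ} : mis j (insert x A) ≤ mis j A :=
  mis_mono (subset_insert x A)

lemma mis_insert_zero {j : ℕ} {A : Set ℕ} : mis j (insert 0 A) = mis j A := by
  rw [mis, mis, diff_insert_eq, diff_singleton_eq_self]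
  rintro ⟨hn, -⟩
  exact zero_not_mem_Br j hn

lemma maximalityP (X : Set ℕ) : Matroid.ExistsMaximalSubsetProperty IndepP X := by
  classical
  intro I hI hIX
  obtain ⟨hz, h02⟩ := indep_iff.mp hI
  by_cases hΦ : ∃ j, mis j X = 0
  case neg =>
    -- Case 1 : no branch is contained in X ; X itself is independent.
    push_neg at hΦ
    refine ⟨X, hIX, maximal_of ?_ subset_rfl (fun x hx hnx => absurd hx hnx)⟩
    exact indep_iff.mpr ⟨fun i i' hi _ => absurd hi (hΦ i),
      fun _ i hi => absurd hi (hΦ i)⟩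
  case pos =>
  obtain ⟨jΦ, hjΦ⟩ := hΦ
  -- the preferred "full" branch
  set i₀ : ℕ := if h : ∃ i, mis i I = 0 then h.choose else jΦ with hi₀def
  have hi₀Φ : mis i₀ X = 0 := by
    rw [hi₀def]
    split
    case isTrue h =>
      exact le_antisymm (le_trans (mis_mono hIX) (le_of_eq h.choose_spec)) (by simp)
    case isFalse h => exact hjΦ
  have hi₀z : ∀ j, mis j I = 0 → j = i₀ := by
    intro j hj
    rw [hi₀def]
    split
    case isTrue h => exact hz hj h.choose_spec
    case isFalse h => exact absurd ⟨j, hj⟩ h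
  have hpick : ∀ j, j ≠ i₀ → (pick (Br j \ I) ∈ Br j ∧ pick (Br j \ I) ∉ I) := by
    intro j hj
    have : mis j I ≠ 0 := fun h => hj (hi₀z j h)
    exact pick_mem (mis_nonempty this)
  set c : ℕ → ℕ := fun j => pick (Br j \ I) with hcdef
  by_cases h0X : 0 ∈ X
  case neg =>
    -- Case 2 : 0 ∉ X
    set P : Set ℕ := {j | mis j X = 0 ∧ j ≠ i₀} with hPdef
    have hcP : ∀ j ∈ P, c j ∈ Br j := fun j hj => (hpick j hj.2).1
    set W : Set ℕ := cset P c with hWdef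
    have hWX : W ⊆ X := by
      rintro n hn
      rw [hWdef, mem_cset] at hn
      obtain ⟨j, hj, rfl⟩ := hn
      exact (mis_eq_zero_iff.mp hj.1) (hcP j hj)
    set J : Set ℕ := X \ W with hJdef
    have hIJ : I ⊆ J := by
      intro n hn
      refine ⟨hIX hn, fun hw => ?_⟩
      rw [hWdef, mem_cset] at hw
      obtain ⟨j, hj, rfl⟩ := hw
      exact (hpick j hj.2).2 hn
    have hmisP : ∀ j ∈ P, Br j \ J = {c j} := by
      intro j hj
      rw [hJdef, brdiff hWX, hWdef, inter_cset_of_mem hcP hj,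
        (mis_eq_zero_iff.mp hj.1 : Br j ⊆ X) |> diff_eq_empty.mpr, empty_union]
    have hmisnP : ∀ j, j ∉ P → mis j J = mis j X := by
      intro j hj
      rw [mis, hJdef, brdiff hWX, hWdef,
        show Br j ∩ cset P c = ∅ by
          have := tr_cset_of_not_mem hcP hj
          rwa [tr, encard_eq_zero] at this,
        union_empty, ← mis]
    have hzJ : ∀ j, mis j J = 0 → j = i₀ := by
      intro j hj
      by_contra hji
      by_cases hjP : j ∈ P
      · rw [mis, hmisP j hjP, encard_singleton] at hj
        norm_num at hj
      · rw [hmisnP j hjP] at hj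
        exact hjP ⟨hj, hji⟩
    have h0J : 0 ∉ J := fun h => h0X (h.1)
    refine ⟨J, hIJ, maximal_of ?_ diff_subset ?_⟩
    · exact indep_iff.mpr ⟨fun i i' hi hi' => (hzJ i hi).trans (hzJ i' hi').symm,
        fun h0 => absurd h0 h0J⟩
    · intro x hxX hxJ hind
      have hxW : x ∈ W := by_contra fun hw => hxJ ⟨hxX, hw⟩
      rw [hWdef, mem_cset] at hxW
      obtain ⟨k, hkP, rfl⟩ := hxW
      obtain ⟨hz', -⟩ := indep_iff.mp hind
      have h1 : mis k (insert (c k) J) = 0 := by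
        rw [mis, diff_insert_eq, hmisP k hkP, diff_self, encard_empty]
      have h2 : mis i₀ (insert (c k) J) = 0 := by
        refine le_antisymm (le_trans mis_insert_le ?_) (by simp)
        rw [hmisnP i₀ (fun h => h.2 rfl), hi₀Φ]
      exact hkP.2 (hz' h1 h2)
  case pos =>
  by_cases hbig : ∃ ℓ, 2 ≤ mis ℓ X
  case pos =>
    -- Case 3 : 0 ∈ X and some branch misses ≥ 2 points of X
    obtain ⟨ℓ, hℓ⟩ := hbig
    have hℓX : mis ℓ X ≠ 0 := by intro h; rw [h] at hℓ; norm_num at hℓ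
    have hℓi₀ : ℓ ≠ i₀ := fun h => hℓX (h ▸ hi₀Φ)
    set P : Set ℕ := {j | mis j X = 0 ∧ j ≠ i₀} with hPdef
    have hcP : ∀ j ∈ P, c j ∈ Br j := fun j hj => (hpick j hj.2).1
    set W : Set ℕ := cset P c with hWdef
    have hWX : W ⊆ X := by
      rintro n hn
      rw [hWdef, mem_cset] at hn
      obtain ⟨j, hj, rfl⟩ := hn
      exact (mis_eq_zero_iff.mp hj.1) (hcP j hj)
    set J : Set ℕ := X \ W with hJdef
    have hIJ : I ⊆ J := by
      intro n hn
      refine ⟨hIX hn, fun hw => ?_⟩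
      rw [hWdef, mem_cset] at hw
      obtain ⟨j, hj, rfl⟩ := hw
      exact (hpick j hj.2).2 hn
    have hmisP : ∀ j ∈ P, Br j \ J = {c j} := by
      intro j hj
      rw [hJdef, brdiff hWX, hWdef, inter_cset_of_mem hcP hj,
        (mis_eq_zero_iff.mp hj.1 : Br j ⊆ X) |> diff_eq_empty.mpr, empty_union]
    have hmisnP : ∀ j, j ∉ P → mis j J = mis j X := by
      intro j hj
      rw [mis, hJdef, brdiff hWX, hWdef,
        show Br j ∩ cset P c = ∅ by
          have := tr_cset_of_not_mem hcP hj
          rwa [tr, encard_eq_zero] at this,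
        union_empty, ← mis]
    have hzJ : ∀ j, mis j J = 0 → j = i₀ := by
      intro j hj
      by_contra hji
      by_cases hjP : j ∈ P
      · rw [mis, hmisP j hjP, encard_singleton] at hj
        norm_num at hj
      · rw [hmisnP j hjP] at hj
        exact hjP ⟨hj, hji⟩
    refine ⟨J, hIJ, maximal_of ?_ diff_subset ?_⟩
    · refine indep_iff.mpr ⟨fun i i' hi hi' => (hzJ i hi).trans (hzJ i' hi').symm, ?_⟩
      intro h0 i hi
      refine ⟨ℓ, by rw [hzJ i hi]; exact hℓi₀, ?_⟩
      rw [hmisnP ℓ (fun h => hℓX h.1)]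
      exact hℓ
    · intro x hxX hxJ hind
      have hxW : x ∈ W := by_contra fun hw => hxJ ⟨hxX, hw⟩
      rw [hWdef, mem_cset] at hxW
      obtain ⟨k, hkP, rfl⟩ := hxW
      obtain ⟨hz', -⟩ := indep_iff.mp hind
      have h1 : mis k (insert (c k) J) = 0 := by
        rw [mis, diff_insert_eq, hmisP k hkP, diff_self, encard_empty]
      have h2 : mis i₀ (insert (c k) J) = 0 := by
        refine le_antisymm (le_trans mis_insert_le ?_) (by simp)
        rw [hmisnP i₀ (fun h => h.2 rfl), hi₀Φ]
      exact hkP.2 (hz' h1 h2)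
  case neg =>
  push_neg at hbig
  have hle : ∀ ℓ, mis ℓ X ≤ 1 := by
    intro ℓ
    have := hbig ℓ
    exact Order.le_of_lt_add_one (by simpa [one_add_one_eq_two] using this)
  by_cases hpair : ∃ ℓ, ℓ ≠ i₀ ∧ 2 ≤ mis ℓ I
  case pos =>
    -- Case 4
    obtain ⟨ℓ, hℓi₀, hℓI⟩ := hpair
    have hsubXI : Br ℓ \ X ⊆ Br ℓ \ I := diff_subset_diff_right hIX
    obtain ⟨t, hts, ht2⟩ := exists_subset_encard_eq hℓI
    obtain ⟨u', v', huv', rfl⟩ := encard_eq_two.mp ht2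
    have hXsing : ∀ a ∈ Br ℓ \ X, ∀ b ∈ Br ℓ \ X, a = b := by
      have h := encard_le_one_iff.mp (hle ℓ)
      exact fun a ha b hb => h a b ha hb
    obtain ⟨u, v, huv, huI, hvI, hXuv⟩ :
        ∃ u v, u ≠ v ∧ u ∈ Br ℓ \ I ∧ v ∈ Br ℓ \ I ∧ Br ℓ \ X ⊆ {u, v} := by
      by_cases hE : (Br ℓ \ X).Nonempty
      · obtain ⟨e₀, he₀⟩ := hE
        rcases eq_or_ne u' e₀ with rfl | hne
        · exact ⟨u', v', huv', hts (by simp), hts (by simp),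
            fun a ha => Or.inl (hXsing a ha u' he₀)⟩
        · exact ⟨e₀, u', fun h => hne h.symm, hsubXI he₀, hts (by simp),
            fun a ha => Or.inl (hXsing a ha e₀ he₀)⟩
      · exact ⟨u', v', huv', hts (by simp), hts (by simp),
          fun a ha => absurd ⟨a, ha⟩ hE⟩
    have huB : u ∈ Br ℓ := huI.1
    have hvB : v ∈ Br ℓ := hvI.1
    set P : Set ℕ := {j | mis j X = 0 ∧ j ≠ i₀ ∧ j ≠ ℓ} with hPdef
    have hcP : ∀ j ∈ P, c j ∈ Br j := fun j hj => (hpick j hj.2.1).1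
    set W : Set ℕ := cset P c ∪ ({u, v} ∩ X) with hWdef
    have hWX : W ⊆ X := by
      rintro n (hn | hn)
      · rw [mem_cset] at hn
        obtain ⟨j, hj, rfl⟩ := hn
        exact (mis_eq_zero_iff.mp hj.1) (hcP j hj)
      · exact hn.2
    set J : Set ℕ := X \ W with hJdef
    have hIJ : I ⊆ J := by
      intro n hn
      refine ⟨hIX hn, fun hw => ?_⟩
      rcases hw with hw | hw
      · rw [mem_cset] at hw
        obtain ⟨j, hj, rfl⟩ := hw
        exact (hpick j hj.2.1).2 hn
      · rcases hw.1 with rfl | hv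
        · exact huI.2 hn
        · exact hvI.2 ((mem_singleton_iff.mp hv) ▸ hn)
    have hBruvP : ∀ j, j ≠ ℓ → Br j ∩ ({u, v} ∩ X) = ∅ := by
      intro j hj
      rw [eq_empty_iff_forall_notMem]
      rintro n ⟨hnB, hnuv, -⟩
      rcases hnuv with rfl | rfl
      · exact hj (Br_index_unique hnB huB)
      · exact hj (Br_index_unique hnB hvB)
    have hmisP : ∀ j ∈ P, Br j \ J = {c j} := by
      intro j hj
      rw [hJdef, brdiff hWX, hWdef, inter_union_distrib_left,
        inter_cset_of_mem hcP hj, hBruvP j hj.2.2,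
        (mis_eq_zero_iff.mp hj.1 : Br j ⊆ X) |> diff_eq_empty.mpr, empty_union, union_empty]
    have hmisnP : ∀ j, j ∉ P → j ≠ ℓ → mis j J = mis j X := by
      intro j hj hjℓ
      rw [mis, hJdef, brdiff hWX, hWdef, inter_union_distrib_left,
        show Br j ∩ cset P c = ∅ by
          have := tr_cset_of_not_mem hcP hj
          rwa [tr, encard_eq_zero] at this,
        hBruvP j hjℓ, union_empty, union_empty, ← mis]
    have hBrℓJ : Br ℓ \ J = {u, v} := by
      rw [hJdef, brdiff hWX, hWdef, inter_union_distrib_left,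
        show Br ℓ ∩ cset P c = ∅ by
          have := tr_cset_of_not_mem hcP (fun h => h.2.2 rfl)
          rwa [tr, encard_eq_zero] at this,
        empty_union, inter_eq_self_of_subset_right (by
          rintro n ⟨hn, -⟩
          rcases hn with rfl | rfl
          · exact huB
          · exact hvB)]
      apply subset_antisymm
      · rintro n (hn | hn)
        · exact hXuv hn
        · exact hn.1
      · rintro n hn
        by_cases hnX : n ∈ X
        · exact Or.inr ⟨hn, hnX⟩
        · rcases hn with rfl | rfl
          · exact Or.inl ⟨huB, hnX⟩
          · exact Or.inl ⟨hvB, hnX⟩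
    have hmisℓJ : mis ℓ J = 2 := by
      rw [mis, hBrℓJ]
      exact encard_pair huv
    have hzJ : ∀ j, mis j J = 0 → j = i₀ := by
      intro j hj
      by_contra hji
      by_cases hjℓ : j = ℓ
      · subst hjℓ
        rw [hmisℓJ] at hj
        norm_num at hj
      · by_cases hjP : j ∈ P
        · rw [mis, hmisP j hjP, encard_singleton] at hj
          norm_num at hj
        · rw [hmisnP j hjP hjℓ] at hj
          exact hjP ⟨hj, hji, hjℓ⟩
    have h0J : 0 ∈ J := by
      refine ⟨h0X, fun hw => ?_⟩
      rcases hw with hw | hw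
      · exact zero_not_mem_cset hcP hw
      · rcases hw.1 with h | h
        · exact ne_zero_of_mem_Br huB h.symm
        · exact ne_zero_of_mem_Br hvB (mem_singleton_iff.mp h).symm
    have hmisle : ∀ j, j ≠ i₀ → ∀ x, mis j (insert x J) ≤ 1 ∨ j = ℓ := by
      intro j hj x
      by_cases hjℓ : j = ℓ
      · exact Or.inr hjℓ
      · left
        refine le_trans mis_insert_le ?_
        by_cases hjP : j ∈ P
        · rw [mis, hmisP j hjP, encard_singleton]
        · rw [hmisnP j hjP hjℓ]
          exact hle j
    refine ⟨J, hIJ, maximal_of ?_ diff_subset ?_⟩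
    · refine indep_iff.mpr ⟨fun i i' hi hi' => (hzJ i hi).trans (hzJ i' hi').symm, ?_⟩
      intro h0 i hi
      exact ⟨ℓ, by rw [hzJ i hi]; exact hℓi₀, by rw [hmisℓJ]⟩
    · intro x hxX hxJ hind
      have hxW : x ∈ W := by_contra fun hw => hxJ ⟨hxX, hw⟩
      obtain ⟨hz', h02'⟩ := indep_iff.mp hind
      have h2i₀ : mis i₀ (insert x J) = 0 := by
        refine le_antisymm (le_trans mis_insert_le ?_) (by simp)
        rw [hmisnP i₀ (fun h => h.2.1 rfl) hℓi₀.symm, hi₀Φ]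
      rcases hxW with hw | hw
      · rw [mem_cset] at hw
        obtain ⟨k, hkP, rfl⟩ := hw
        have h1 : mis k (insert (c k) J) = 0 := by
          rw [mis, diff_insert_eq, hmisP k hkP, diff_self, encard_empty]
        exact hkP.2.1 (hz' h1 h2i₀)
      · obtain ⟨j', hj'i₀, hj'2⟩ := h02' (Or.inr h0J) i₀ h2i₀
        have hj'le : mis j' (insert x J) ≤ 1 := by
          rcases hmisle j' hj'i₀ x with h | rfl
          · exact h
          · rw [mis, diff_insert_eq, hBrℓJ]
            rcases hw.1 with rfl | hxv
            · refine le_trans (encard_le_encard (show ({x, v} : Set ℕ) \ {x} ⊆ {v} from ?_))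
                (by rw [encard_singleton])
              rintro n ⟨hn | hn, hnx⟩
              · exact absurd hn hnx
              · exact hn
            · have hxv' : x = v := mem_singleton_iff.mp hxv
              subst hxv'
              refine le_trans (encard_le_encard (show ({u, x} : Set ℕ) \ {x} ⊆ {u} from ?_))
                (by rw [encard_singleton])
              rintro n ⟨hn | hn, hnx⟩
              · exact mem_singleton_iff.mpr hn
              · exact absurd hn hnx
        exact absurd (le_trans hj'2 hj'le) (by norm_num)
  case neg =>
  push_neg at hpair
  have hnp : ∀ ℓ, ℓ ≠ i₀ → mis ℓ I ≤ 1 := by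
    intro ℓ hℓ
    have := hpair ℓ hℓ
    exact Order.le_of_lt_add_one (by simpa [one_add_one_eq_two] using this)
  by_cases hful : mis i₀ I = 0
  case pos =>
    -- Case 6 : I has a full branch i₀, and nothing big anywhere : drop 0.
    have h0I : 0 ∉ I := by
      intro h0
      obtain ⟨j, hj, h2⟩ := h02 h0 i₀ hful
      exact absurd (le_trans h2 (hnp j hj)) (by norm_num)
    set P : Set ℕ := {j | mis j X = 0 ∧ j ≠ i₀} with hPdef
    have hcP : ∀ j ∈ P, c j ∈ Br j := fun j hj => (hpick j hj.2).1
    set W : Set ℕ := insert 0 (cset P c) with hWdef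
    have hWX : W ⊆ X := by
      rintro n (rfl | hn)
      · exact h0X
      · rw [mem_cset] at hn
        obtain ⟨j, hj, rfl⟩ := hn
        exact (mis_eq_zero_iff.mp hj.1) (hcP j hj)
    set J : Set ℕ := X \ W with hJdef
    have hIJ : I ⊆ J := by
      intro n hn
      refine ⟨hIX hn, fun hw => ?_⟩
      rcases hw with rfl | hw
      · exact h0I hn
      · rw [mem_cset] at hw
        obtain ⟨j, hj, rfl⟩ := hw
        exact (hpick j hj.2).2 hn
    have hBrW : ∀ j, Br j ∩ W = Br j ∩ cset P c := by
      intro j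
      rw [hWdef, inter_insert_of_notMem (zero_not_mem_Br j)]
    have hmisP : ∀ j ∈ P, Br j \ J = {c j} := by
      intro j hj
      rw [hJdef, brdiff hWX, hBrW, inter_cset_of_mem hcP hj,
        (mis_eq_zero_iff.mp hj.1 : Br j ⊆ X) |> diff_eq_empty.mpr, empty_union]
    have hmisnP : ∀ j, j ∉ P → mis j J = mis j X := by
      intro j hj
      rw [mis, hJdef, brdiff hWX, hBrW,
        show Br j ∩ cset P c = ∅ by
          have := tr_cset_of_not_mem hcP hj
          rwa [tr, encard_eq_zero] at this,
        union_empty, ← mis]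
    have hzJ : ∀ j, mis j J = 0 → j = i₀ := by
      intro j hj
      by_contra hji
      by_cases hjP : j ∈ P
      · rw [mis, hmisP j hjP, encard_singleton] at hj
        norm_num at hj
      · rw [hmisnP j hjP] at hj
        exact hjP ⟨hj, hji⟩
    have h0J : 0 ∉ J := fun h => h.2 (Or.inl rfl)
    have hmisi₀J : mis i₀ J = 0 := by
      rw [hmisnP i₀ (fun h => h.2 rfl), hi₀Φ]
    refine ⟨J, hIJ, maximal_of ?_ diff_subset ?_⟩
    · exact indep_iff.mpr ⟨fun i i' hi hi' => (hzJ i hi).trans (hzJ i' hi').symm,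
        fun h0 => absurd h0 h0J⟩
    · intro x hxX hxJ hind
      have hxW : x ∈ W := by_contra fun hw => hxJ ⟨hxX, hw⟩
      obtain ⟨hz', h02'⟩ := indep_iff.mp hind
      rcases hxW with rfl | hw
      · have h2i₀ : mis i₀ (insert 0 J) = 0 := by
          rw [mis_insert_zero]
          exact hmisi₀J
        obtain ⟨j', hj'i₀, hj'2⟩ := h02' (Or.inl rfl) i₀ h2i₀
        have : mis j' (insert 0 J) ≤ 1 := by
          rw [mis_insert_zero]
          by_cases hjP : j' ∈ P
          · rw [mis, hmisP j' hjP, encard_singleton]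
          · rw [hmisnP j' hjP]
            exact hle j'
        exact absurd (le_trans hj'2 this) (by norm_num)
      · rw [mem_cset] at hw
        obtain ⟨k, hkP, rfl⟩ := hw
        have h1 : mis k (insert (c k) J) = 0 := by
          rw [mis, diff_insert_eq, hmisP k hkP, diff_self, encard_empty]
        have h2 : mis i₀ (insert (c k) J) = 0 :=
          le_antisymm (le_trans mis_insert_le (le_of_eq hmisi₀J)) (by simp)
        exact hkP.2 (hz' h1 h2)
  case neg =>
    -- Case 5 : no full branch in I at all.
    have hnful : ∀ j, mis j I ≠ 0 := fun j hj => hful ((hi₀z j hj) ▸ hj)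
    set P : Set ℕ := {j | mis j X = 0} with hPdef
    have hcP : ∀ j ∈ P, c j ∈ Br j := fun j _ => (pick_mem (mis_nonempty (hnful j))).1
    have hcI : ∀ j, c j ∉ I := fun j => (pick_mem (mis_nonempty (hnful j))).2
    set W : Set ℕ := cset P c with hWdef
    have hWX : W ⊆ X := by
      rintro n hn
      rw [hWdef, mem_cset] at hn
      obtain ⟨j, hj, rfl⟩ := hn
      exact (mis_eq_zero_iff.mp hj) (hcP j hj)
    set J : Set ℕ := X \ W with hJdef
    have hIJ : I ⊆ J := by
      intro n hn
      refine ⟨hIX hn, fun hw => ?_⟩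
      rw [hWdef, mem_cset] at hw
      obtain ⟨j, hj, rfl⟩ := hw
      exact hcI j hn
    have hmisP : ∀ j ∈ P, Br j \ J = {c j} := by
      intro j hj
      rw [hJdef, brdiff hWX, hWdef, inter_cset_of_mem hcP hj,
        (mis_eq_zero_iff.mp hj : Br j ⊆ X) |> diff_eq_empty.mpr, empty_union]
    have hmisnP : ∀ j, j ∉ P → mis j J = mis j X := by
      intro j hj
      rw [mis, hJdef, brdiff hWX, hWdef,
        show Br j ∩ cset P c = ∅ by
          have := tr_cset_of_not_mem hcP hj
          rwa [tr, encard_eq_zero] at this,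
        union_empty, ← mis]
    have hzJ : ∀ j, mis j J ≠ 0 := by
      intro j hj
      by_cases hjP : j ∈ P
      · rw [mis, hmisP j hjP, encard_singleton] at hj
        norm_num at hj
      · rw [hmisnP j hjP] at hj
        exact hjP hj
    have h0J : 0 ∈ J :=
      ⟨h0X, fun hw => zero_not_mem_cset hcP hw⟩
    refine ⟨J, hIJ, maximal_of ?_ diff_subset ?_⟩
    · exact indep_iff.mpr ⟨fun i i' hi _ => absurd hi (hzJ i),
        fun _ i hi => absurd hi (hzJ i)⟩
    · intro x hxX hxJ hind
      have hxW : x ∈ W := by_contra fun hw => hxJ ⟨hxX, hw⟩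
      rw [hWdef, mem_cset] at hxW
      obtain ⟨k, hkP, rfl⟩ := hxW
      obtain ⟨hz', h02'⟩ := indep_iff.mp hind
      have h1 : mis k (insert (c k) J) = 0 := by
        rw [mis, diff_insert_eq, hmisP k hkP, diff_self, encard_empty]
      obtain ⟨j', hj'k, hj'2⟩ := h02' (Or.inr h0J) k h1
      have hckBr : c k ∈ Br k := hcP k hkP
      have : mis j' (insert (c k) J) ≤ 1 := by
        refine le_trans (mis_mono (subset_insert _ _)) ?_
        by_cases hjP : j' ∈ P
        · rw [mis, hmisP j' hjP, encard_singleton]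
        · rw [hmisnP j' hjP]
          exact hle j'
      exact absurd (le_trans hj'2 this) (by norm_num)

def zpt (j : ℕ) : ℕ := Nat.pair j 1 + 1
def b0 (j : ℕ) : ℕ := Nat.pair j 0 + 1

lemma zpt_mem (j : ℕ) : zpt j ∈ Br j := ⟨1, rfl⟩
lemma b0_mem (j : ℕ) : b0 j ∈ Br j := ⟨0, rfl⟩

lemma zpt_inj : Function.Injective zpt := by
  intro a b h
  have := Nat.succ_injective h
  exact (Nat.pair_eq_pair.mp this).1

lemma zpt_ne_b0 {j j' : ℕ} : zpt j ≠ b0 j' := by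
  intro h
  have := Nat.succ_injective h
  exact absurd (Nat.pair_eq_pair.mp this).2 one_ne_zero

lemma base_zptR : BaseP (cset univ zpt)ᶜ := by
  rw [BaseP, compl_compl]
  right; right
  exact ⟨zero_not_mem_cset (fun j _ => zpt_mem j),
    fun j => tr_cset_of_mem (fun j _ => zpt_mem j) (mem_univ j)⟩

lemma baseP_exchange : Matroid.ExchangeProperty BaseP := by
  intro B₁ B₂ h1 h2 a ha
  obtain ⟨y, hy1, hy2, hsh⟩ :=
    exchangeR (R₁ := B₁ᶜ) (R₂ := B₂ᶜ) h1 h2 (x := a) ha.2 (fun h => h ha.1)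
  refine ⟨y, ⟨notMem_compl_iff.mp hy2, hy1⟩, ?_⟩
  have hset : (insert y (B₁ \ {a}))ᶜ = (insert a B₁ᶜ) \ {y} := by
    ext n
    simp only [mem_compl_iff, mem_insert_iff, mem_diff, mem_singleton_iff]
    tauto
  rw [BaseP, hset]
  exact hsh

/-- The wild matroid. -/
noncomputable def M : Matroid ℕ where
  E := univ
  IsBase := BaseP
  Indep := IndepP
  indep_iff' := fun I => Iff.rfl
  exists_isBase := ⟨(cset univ zpt)ᶜ, base_zptR⟩
  isBase_exchange := baseP_exchange
  maximality := fun X _ => maximalityP X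
  subset_ground := fun B _ => subset_univ B

lemma M_indep {I : Set ℕ} : M.Indep I ↔ IndepP I := Iff.rfl
lemma M_base {B : Set ℕ} : M.IsBase B ↔ BaseP B := Iff.rfl

/-- The circuit. -/
def Cst : Set ℕ := (cset {j | j ≠ 0} b0)ᶜ
/-- The cocircuit. -/
def Dst : Set ℕ := insert 0 (cset univ zpt)

lemma hb0 : ∀ j ∈ {j : ℕ | j ≠ 0}, b0 j ∈ Br j := fun j _ => b0_mem j
lemma hzptc : ∀ j ∈ (univ : Set ℕ), zpt j ∈ Br j := fun j _ => zpt_mem j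

lemma zero_mem_C : (0:ℕ) ∈ Cst := zero_not_mem_cset hb0

lemma mis_C {j : ℕ} : mis j Cst = tr j (cset {j | j ≠ 0} b0) := by
  rw [mis_eq_tr, Cst, compl_compl]

lemma C_circuit : M.IsCircuit' Cst := by
  constructor
  · refine ⟨fun hind => ?_, subset_univ _⟩
    obtain ⟨-, h02⟩ := indep_iff.mp (M_indep.mp hind)
    have h0 : mis 0 Cst = 0 := by
      rw [mis_C, tr_cset_of_not_mem hb0 (by simp)]
    obtain ⟨j, hj, h2⟩ := h02 zero_mem_C 0 h0
    rw [mis_C, tr_cset_of_mem hb0 hj] at h2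
    exact absurd h2 (by norm_num)
  · intro D' hD' hsub
    have hni : ¬ IndepP D' := hD'.not_indep
    have claim1 : ∀ i, mis i D' = 0 → i = 0 := by
      intro i hi
      by_contra hi0
      have : b0 i ∈ D' := (mis_eq_zero_iff.mp hi) (b0_mem i)
      have : b0 i ∈ Cst := hsub this
      refine this ?_
      rw [mem_cset]
      exact ⟨i, hi0, rfl⟩
    have hP : ∀ ⦃i i'⦄, mis i D' = 0 → mis i' D' = 0 → i = i' :=
      fun i i' hi hi' => (claim1 i hi).trans (claim1 i' hi').symm
    have hQ : ¬ (0 ∈ D' → ∀ i, mis i D' = 0 → ∃ j, j ≠ i ∧ 2 ≤ mis j D') :=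
      fun q => hni (indep_iff.mpr ⟨hP, q⟩)
    push_neg at hQ
    obtain ⟨h0D, i, hiD, hno⟩ := hQ
    have hi0 : i = 0 := claim1 i hiD
    subst hi0
    have hBr0 : Br 0 ⊆ D' := mis_eq_zero_iff.mp hiD
    have hone : ∀ j, j ≠ 0 → ∀ n, n ∈ Br j → n ∉ D' → n = b0 j := by
      intro j hj n hn hnD
      have hb0j : b0 j ∈ Br j \ D' := by
        refine ⟨b0_mem j, fun hmem => ?_⟩
        refine (hsub hmem) ?_
        rw [mem_cset]
        exact ⟨j, hj, rfl⟩
      have hle1 : mis j D' ≤ 1 := by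
        have := hno j hj
        exact Order.le_of_lt_add_one (by simpa [one_add_one_eq_two] using this)
      exact encard_le_one_iff.mp hle1 n (b0 j) ⟨hn, hnD⟩ hb0j
    apply subset_antisymm hsub
    intro n hn
    rcases eq_or_ne n 0 with rfl | hn0
    · exact h0D
    · obtain ⟨k, hk⟩ := mem_Br_of_ne_zero hn0
      rcases eq_or_ne k 0 with rfl | hk0
      · exact hBr0 hk
      · by_contra hnD
        refine hn ?_
        rw [hone k hk0 n hk hnD, mem_cset]
        exact ⟨k, hk0, rfl⟩

lemma D_cocircuit : M✶.IsCircuit' Dst := by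
  constructor
  · refine ⟨fun hind => ?_, subset_univ _⟩
    obtain ⟨-, B, hB, hdisj⟩ := (Matroid.dual_indep_iff_exists').mp hind
    rcases (M_base.mp hB : Shape Bᶜ) with ⟨h0R, i, hi, -⟩ | ⟨h0R, -⟩ | ⟨h0R, -⟩
    · have hzB : zpt i ∈ B := by
        have := tr_eq_zero_iff.mp hi
        have h := this (zpt i) (zpt_mem i)
        exact notMem_compl_iff.mp h
      have hzD : zpt i ∈ Dst := Or.inr (mem_cset.mpr ⟨i, mem_univ i, rfl⟩)
      exact (disjoint_left.mp hdisj hzD) hzB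
    · exact (disjoint_left.mp hdisj (Or.inl rfl)) (notMem_compl_iff.mp h0R)
    · exact (disjoint_left.mp hdisj (Or.inl rfl)) (notMem_compl_iff.mp h0R)
  · intro D' hD' hsub
    by_contra hne
    have hssub : ∃ x, x ∈ Dst ∧ x ∉ D' := by
      by_contra h
      push_neg at h
      exact hne (subset_antisymm hsub h)
    obtain ⟨x, hxD, hxD'⟩ := hssub
    have hD'sub : D' ⊆ Dst \ {x} := fun n hn => ⟨hsub hn, fun h => hxD' (h ▸ hn)⟩
    have hcoind : M✶.Indep (Dst \ {x}) := by
      rw [Matroid.dual_indep_iff_exists']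
      refine ⟨subset_univ _, ?_⟩
      rcases hxD with rfl | hx
      · refine ⟨(cset univ zpt)ᶜ, base_zptR, ?_⟩
        rw [disjoint_left]
        rintro n ⟨hn, hn0⟩ hnB
        rcases hn with rfl | hn
        · exact hn0 rfl
        · exact hnB hn
      · rw [mem_cset] at hx
        obtain ⟨k, -, rfl⟩ := hx
        refine ⟨({0} ∪ cset {j | j ≠ k} zpt)ᶜ, ?_, ?_⟩
        · rw [M_base, BaseP, compl_compl]
          left
          refine ⟨Or.inl rfl, k, ?_, ?_⟩
          · rw [tr_union_zero, tr_cset_of_not_mem (fun j _ => zpt_mem j) (by simp)]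
          · intro j hj
            rw [tr_union_zero, tr_cset_of_mem (fun j _ => zpt_mem j) hj]
        · rw [disjoint_left]
          rintro n ⟨hn, hnx⟩ hnB
          rcases hn with rfl | hn
          · exact hnB (Or.inl rfl)
          · rw [mem_cset] at hn
            obtain ⟨j, -, rfl⟩ := hn
            have hjk : j ≠ k := fun h => hnx (by rw [h]; exact rfl)
            refine hnB (Or.inr ?_)
            rw [mem_cset]
            exact ⟨j, hjk, rfl⟩
    exact hD'.not_indep (hcoind.subset hD'sub)

lemma D_subset_C : Dst ⊆ Cst := by
  rintro n (rfl | hn)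
  · exact zero_mem_C
  · rw [mem_cset] at hn
    obtain ⟨j, -, rfl⟩ := hn
    intro hmem
    rw [mem_cset] at hmem
    obtain ⟨j', -, h⟩ := hmem
    exact zpt_ne_b0 h

lemma D_infinite : Dst.Infinite := by
  refine Set.Infinite.mono ?_ (Set.infinite_of_injective_forall_mem zpt_inj
    (fun j => mem_cset.mpr ⟨j, mem_univ j, rfl⟩))
  exact subset_insert _ _

end WildM

/-- There is an infinite matroid with a circuit `C` and a cocircuit `D` (a circuit of the dual)
such that `C ∩ D` is infinite. -/
theorem exists_wild_matroid :
    ∃ (M : Matroid ℕ) (C D : Set ℕ), M.E.Infinite ∧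
      M.IsCircuit' C ∧ M✶.IsCircuit' D ∧ (C ∩ D).Infinite := by
  refine ⟨WildM.M, WildM.Cst, WildM.Dst, Set.infinite_univ, WildM.C_circuit,
    WildM.D_cocircuit, ?_⟩
  rw [Set.inter_eq_self_of_subset_right WildM.D_subset_C]
  exact WildM.D_infinite
end

section
/- For any matroid M whose ground set is not a base, if e ∈ E \ B for some base B of M, then the complement E \ B of a base B of M is a circuit of (M⁺)* ; equivalently, every base of M* is a circuit of (M*)⁻. -/
/-- Let `Mp = M⁺` (bases `B + e` with `B` a base of `M`, `e ∈ E \ B`; the ground set is not a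
base). Then for every base `B` of `M`, the complement `E \ B` (which is a base of `M✶`) is a
circuit of `(M⁺)✶ = (M✶)⁻`. -/
theorem compl_base_circuit_of_dual_Mplus {α : Type*} (M Mp : Matroid α)
    (hEb : ¬ M.IsBase M.E) (hE : Mp.E = M.E)
    (hB : ∀ X, Mp.IsBase X ↔ ∃ B e, M.IsBase B ∧ e ∈ M.E \ B ∧ X = insert e B) :
    ∀ B, M.IsBase B → Mp✶.IsCircuit' (M.E \ B) := by
  intro B hBbase
  constructor
  · rw [Matroid.dep_iff]
    constructor
    · rw [Matroid.dual_indep_iff_exists']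
      rintro ⟨-, B', hB', hdisj⟩
      obtain ⟨B₀, e, hB₀, ⟨heE, heB₀⟩, rfl⟩ := (hB B').1 hB'
      have hsub : insert e B₀ ⊆ B := by
        intro x hx
        by_contra hxB
        have hxE : x ∈ M.E := by
          rcases hx with rfl | hx
          · exact heE
          · exact hB₀.subset_ground hx
        exact hdisj.ne_of_mem ⟨hxE, hxB⟩ hx rfl
      have hB₀B : B₀ ⊆ B := fun x hx => hsub (Set.mem_insert_of_mem _ hx)
      have := hB₀.eq_of_subset_isBase hBbase hB₀B
      subst this
      exact heB₀ (hsub (Set.mem_insert _ _))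
    · rw [Matroid.dual_ground, hE]
      exact Set.diff_subset
  · intro D hD hDsub
    by_contra hne
    obtain ⟨x, hxEB, hxD⟩ : ∃ x, x ∈ M.E \ B ∧ x ∉ D := by
      by_contra h
      push_neg at h
      exact hne (Set.Subset.antisymm hDsub (fun x hx => by
        by_contra hxD; exact hxD (h x hx)))
    have hMpB : Mp.IsBase (insert x B) := (hB _).2 ⟨B, x, hBbase, hxEB, rfl⟩
    have : Mp✶.Indep D := by
      rw [Matroid.dual_indep_iff_exists']
      refine ⟨hD.subset_ground, insert x B, hMpB, ?_⟩
      have : Disjoint D B := Set.disjoint_of_subset_left hDsub Set.disjoint_sdiff_left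
      intro S hSD hSB y hy
      rcases hSB hy with rfl | h
      · exact hxD (hSD hy)
      · exact this.ne_of_mem (hSD hy) h rfl
    exact hD.not_indep this
end

section
/- Suppose (f_e : e ∈ E) is a family of functions A → k, and suppose for each i ≥ 1 there are scalars with λ^i_{p_{i−1}} f_{p_{i−1}}(a) + λ^i_{r_i} f_{r_i}(a) + λ^i_{p_i} f_{p_i}(a) = 0 for all a ∈ A, where all λ^i coefficients are nonzero, and λ^0_{r_0} f_{r_0}(a) + λ^0_{p_0} f_{p_0}(a) = 0 for all a. Define ν_0 = 1, ν_i = −(λ^i_{p_i}/λ^i_{p_{i−1}}) ν_{i−1}, μ_i = −(λ^i_{r_i}/λ^i_{p_i}) ν_i (with μ_0 analogous). Then for all i and all a ∈ A: ν_i f_{p_i}(a) = ∑_{j=0}^{i} μ_j f_{r_j}(a); moreover all ν_i and μ_i are nonzero, and if for a given a only finitely many f_{p_i}(a) are nonzero, then only finitely many f_{r_i}(a) are nonzero and ∑_{i=0}^{∞} μ_i f_{r_i}(a) = 0. -/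
/-- The telescoping argument from Theorem 5.5: given families `f_{p i}, f_{r i} : A → k` and
relations `λ⁰_{r₀} f_{r₀}(a) + λ⁰_{p₀} f_{p₀}(a) = 0` and
`λⁱ_{p_{i-1}} f_{p_{i-1}}(a) + λⁱ_{r_i} f_{r_i}(a) + λⁱ_{p_i} f_{p_i}(a) = 0` (all coefficients
nonzero), define `ν₀ = 1`, `ν_i = -(λⁱ_{p_i}/λⁱ_{p_{i-1}}) ν_{i-1}` and
`μ_i = -(λⁱ_{r_i}/λⁱ_{p_i}) ν_i`. Then `ν_i f_{p_i}(a) = ∑_{j ≤ i} μ_j f_{r_j}(a)`, all `ν_i, μ_i`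
are nonzero, and whenever only finitely many `f_{p_i}(a)` are nonzero, only finitely many
`f_{r_i}(a)` are nonzero and `∑_{i} μ_i f_{r_i}(a) = 0`. -/
theorem telescoping_thin_dependence {A k : Type*} [Field k]
    (fp fr : ℕ → A → k)
    (a b c : ℕ → k)
    (hb : ∀ i, b i ≠ 0) (hc : ∀ i, c i ≠ 0) (ha : ∀ i, a (i + 1) ≠ 0)
    (h0 : ∀ x : A, b 0 * fr 0 x + c 0 * fp 0 x = 0)
    (hrec : ∀ (i : ℕ) (x : A),
      a (i + 1) * fp i x + b (i + 1) * fr (i + 1) x + c (i + 1) * fp (i + 1) x = 0)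
    (ν μ : ℕ → k)
    (hν0 : ν 0 = 1)
    (hν : ∀ i, ν (i + 1) = -(c (i + 1) / a (i + 1)) * ν i)
    (hμ : ∀ i, μ i = -(b i / c i) * ν i) :
    (∀ (i : ℕ) (x : A), ν i * fp i x = ∑ j ∈ Finset.range (i + 1), μ j * fr j x) ∧
    (∀ i, ν i ≠ 0 ∧ μ i ≠ 0) ∧
    (∀ x : A, {i : ℕ | fp i x ≠ 0}.Finite →
      {i : ℕ | fr i x ≠ 0}.Finite ∧ ∑ᶠ i : ℕ, μ i * fr i x = 0) := by
  have hνne : ∀ i, ν i ≠ 0 := by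
    intro i
    induction i with
    | zero => rw [hν0]; exact one_ne_zero
    | succ n ih =>
      rw [hν n]
      exact mul_ne_zero (neg_ne_zero.2 (div_ne_zero (hc _) (ha _))) ih
  have hμne : ∀ i, μ i ≠ 0 := fun i => by
    rw [hμ i]
    exact mul_ne_zero (neg_ne_zero.2 (div_ne_zero (hb _) (hc _))) (hνne i)
  have key : ∀ (i : ℕ) (x : A), ν i * fp i x = ∑ j ∈ Finset.range (i + 1), μ j * fr j x := by
    intro i x
    induction i with
    | zero =>
      rw [Finset.sum_range_one, hν0, one_mul, hμ 0, hν0]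
      field_simp [hc 0]
      linear_combination h0 x
    | succ n ih =>
      rw [Finset.sum_range_succ, ← ih, hμ (n + 1), hν n]
      field_simp [ha n, hc (n + 1)]
      linear_combination (-(ν n)) * hrec n x
  refine ⟨key, fun i => ⟨hνne i, hμne i⟩, fun x hfin => ?_⟩
  obtain ⟨N, hN⟩ := hfin.bddAbove
  have hfp0 : ∀ i, N < i → fp i x = 0 := by
    intro i hi
    by_contra h
    exact absurd (hN h) (not_le.2 hi)
  have hsum0 : ∀ i, N < i → ∑ j ∈ Finset.range (i + 1), μ j * fr j x = 0 := by
    intro i hi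
    rw [← key i x, hfp0 i hi, mul_zero]
  have hfr0 : ∀ i, N + 1 < i → fr i x = 0 := by
    intro i hi
    obtain ⟨m, rfl⟩ : ∃ m, i = m + 1 := ⟨i - 1, by omega⟩
    have h1 := hsum0 m (by omega)
    have h2 := hsum0 (m + 1) (by omega)
    rw [Finset.sum_range_succ, h1, zero_add] at h2
    exact (mul_eq_zero.1 h2).resolve_left (hμne (m + 1))
  have hsub : {i : ℕ | fr i x ≠ 0} ⊆ Set.Iic (N + 1) := by
    intro i hi
    by_contra h
    exact hi (hfr0 i (by simpa using h))
  refine ⟨(Set.finite_Iic _).subset hsub, ?_⟩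
  have hsupp : (Function.support fun i => μ i * fr i x) ⊆ ↑(Finset.range (N + 2)) := by
    intro i hi
    simp only [Finset.coe_range, Set.mem_Iio]
    by_contra h
    exact hi (show μ i * fr i x = 0 by rw [hfr0 i (by omega), mul_zero])
  rw [finsum_eq_sum_of_support_subset _ hsupp]
  have := hsum0 (N + 1) (by omega)
  simpa using this
end
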